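/- arXiv:1707.08330 — 8 statements merged into one kernel-verified Lean document; each statement's English description precedes it below -/
import Mathlib

section
/- In the algebra A_f = K{r,s,t}/I associated to a binary quartic f = ax⁴+bx³z+cx²z²+dxz³+ez⁴, where I is generated by r²−a, rs+sr−b, rt+tr+s²−c, st+ts−d, t²−e, the element ξ = s² − c is central. -/
/-- The relations defining the algebra `A_f` associated to the binary quartic
`f = a x⁴ + b x³ z + c x² z² + d x z³ + e z⁴`: the quotient of the free algebra on
generators `r = ι 0`, `s = ι 1`, `t = ι 2` by the two-sided ideal generated by
`r²−a`, `rs+sr−b`, `rt+tr+s²−c`, `st+ts−d`, `t²−e`. -/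
def bqRel (K : Type*) [Field K] (a b c d e : K) :
    FreeAlgebra K (Fin 3) → FreeAlgebra K (Fin 3) → Prop := fun x y =>
  y = 0 ∧ (
    x = FreeAlgebra.ι K 0 * FreeAlgebra.ι K 0 - algebraMap K _ a ∨
    x = FreeAlgebra.ι K 0 * FreeAlgebra.ι K 1 + FreeAlgebra.ι K 1 * FreeAlgebra.ι K 0
        - algebraMap K _ b ∨
    x = FreeAlgebra.ι K 0 * FreeAlgebra.ι K 2 + FreeAlgebra.ι K 2 * FreeAlgebra.ι K 0
        + FreeAlgebra.ι K 1 * FreeAlgebra.ι K 1 - algebraMap K _ c ∨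
    x = FreeAlgebra.ι K 1 * FreeAlgebra.ι K 2 + FreeAlgebra.ι K 2 * FreeAlgebra.ι K 1
        - algebraMap K _ d ∨
    x = FreeAlgebra.ι K 2 * FreeAlgebra.ι K 2 - algebraMap K _ e)

/-- The algebra `A_f` associated to a binary quartic. -/
def BQAlg (K : Type*) [Field K] (a b c d e : K) := RingQuot (bqRel K a b c d e)

noncomputable instance (K : Type*) [Field K] (a b c d e : K) : Ring (BQAlg K a b c d e) :=
  inferInstanceAs (Ring (RingQuot _))

noncomputable instance (K : Type*) [Field K] (a b c d e : K) : Algebra K (BQAlg K a b c d e) :=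
  inferInstanceAs (Algebra K (RingQuot _))

/-- The generator `r` of `A_f`. -/
noncomputable def bqR (K : Type*) [Field K] (a b c d e : K) : BQAlg K a b c d e :=
  RingQuot.mkAlgHom K (bqRel K a b c d e) (FreeAlgebra.ι K 0)

/-- The generator `s` of `A_f`. -/
noncomputable def bqS (K : Type*) [Field K] (a b c d e : K) : BQAlg K a b c d e :=
  RingQuot.mkAlgHom K (bqRel K a b c d e) (FreeAlgebra.ι K 1)

/-- The generator `t` of `A_f`. -/
noncomputable def bqT (K : Type*) [Field K] (a b c d e : K) : BQAlg K a b c d e :=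
  RingQuot.mkAlgHom K (bqRel K a b c d e) (FreeAlgebra.ι K 2)


/-- If `r*s + s*r = x` with `x` central, then `r` commutes with `s*s`. -/
lemma bq_comm_aux {A : Type*} [Ring A] (r s x : A) (h : r * s + s * r = x)
    (hx : ∀ y, x * y = y * x) : r * (s * s) = (s * s) * r := by
  have h1 : r * s = x - s * r := eq_sub_of_add_eq h
  calc r * (s * s) = (r * s) * s := by rw [mul_assoc]
    _ = (x - s * r) * s := by rw [h1]
    _ = x * s - s * (r * s) := by noncomm_ring
    _ = x * s - s * (x - s * r) := by rw [h1]
    _ = x * s - s * x + (s * s) * r := by noncomm_ring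
    _ = (s * s) * r := by rw [hx s]; abel

/-- In the algebra `A_f` of a binary quartic, the element `ξ = s² − c` is central. -/
theorem bq_xi_central (K : Type*) [Field K] (h2 : (2 : K) ≠ 0) (h3 : (3 : K) ≠ 0)
    (a b c d e : K) :
    ∀ z : BQAlg K a b c d e,
      (bqS K a b c d e ^ 2 - algebraMap K _ c) * z =
        z * (bqS K a b c d e ^ 2 - algebraMap K _ c) := by
  classical
  set φ := RingQuot.mkAlgHom K (bqRel K a b c d e) with hφ
  have hb : bqR K a b c d e * bqS K a b c d e + bqS K a b c d e * bqR K a b c d e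
      = algebraMap K _ b := by
    have h := RingQuot.mkAlgHom_rel K
      (show bqRel K a b c d e
        (FreeAlgebra.ι K 0 * FreeAlgebra.ι K 1 + FreeAlgebra.ι K 1 * FreeAlgebra.ι K 0
          - algebraMap K _ b) 0 from ⟨rfl, Or.inr (Or.inl rfl)⟩)
    simp only [map_sub, map_add, map_mul, map_zero, AlgHom.commutes, sub_eq_zero] at h
    exact h
  have hd : bqS K a b c d e * bqT K a b c d e + bqT K a b c d e * bqS K a b c d e
      = algebraMap K _ d := by
    have h := RingQuot.mkAlgHom_rel K
      (show bqRel K a b c d e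
        (FreeAlgebra.ι K 1 * FreeAlgebra.ι K 2 + FreeAlgebra.ι K 2 * FreeAlgebra.ι K 1
          - algebraMap K _ d) 0 from ⟨rfl, Or.inr (Or.inr (Or.inr (Or.inl rfl)))⟩)
    simp only [map_sub, map_add, map_mul, map_zero, AlgHom.commutes, sub_eq_zero] at h
    exact h
  set S2 : BQAlg K a b c d e := bqS K a b c d e ^ 2 with hS2
  have hSS : S2 = bqS K a b c d e * bqS K a b c d e := sq _
  have hR : S2 * bqR K a b c d e = bqR K a b c d e * S2 := by
    rw [hSS]
    exact (bq_comm_aux _ _ _ hb (fun y => Algebra.commutes b y)).symm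
  have hT : S2 * bqT K a b c d e = bqT K a b c d e * S2 := by
    rw [hSS]
    refine (bq_comm_aux _ _ _ ?_ (fun y => Algebra.commutes d y)).symm
    rw [add_comm]; exact hd
  have hS : S2 * bqS K a b c d e = bqS K a b c d e * S2 := by
    rw [hSS, mul_assoc]
  have key : ∀ z : BQAlg K a b c d e, S2 * z = z * S2 := by
    have surj := RingQuot.mkAlgHom_surjective K (bqRel K a b c d e)
    intro z
    obtain ⟨x, rfl⟩ := surj z
    induction x using FreeAlgebra.induction with
    | grade0 k => rw [AlgHom.commutes]; exact (Algebra.commutes k S2).symm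
    | grade1 i =>
        fin_cases i
        · exact hR
        · exact hS
        · exact hT
    | mul p q hp hq =>
        rw [map_mul]
        show S2 * ((show BQAlg K a b c d e from RingQuot.mkAlgHom K (bqRel K a b c d e) p) * (show BQAlg K a b c d e from RingQuot.mkAlgHom K (bqRel K a b c d e) q)) = ((show BQAlg K a b c d e from RingQuot.mkAlgHom K (bqRel K a b c d e) p) * (show BQAlg K a b c d e from RingQuot.mkAlgHom K (bqRel K a b c d e) q)) * S2
        exact (mul_assoc _ _ _).symm.trans ((congrArg (· * _) hp).trans ((mul_assoc _ _ _).trans ((congrArg (fun y : BQAlg K a b c d e => (show BQAlg K a b c d e from RingQuot.mkAlgHom K (bqRel K a b c d e) p) * y) hq).trans (mul_assoc _ _ _).symm)))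
    | add p q hp hq =>
        rw [map_add]
        show S2 * ((show BQAlg K a b c d e from RingQuot.mkAlgHom K (bqRel K a b c d e) p) + (show BQAlg K a b c d e from RingQuot.mkAlgHom K (bqRel K a b c d e) q)) = ((show BQAlg K a b c d e from RingQuot.mkAlgHom K (bqRel K a b c d e) p) + (show BQAlg K a b c d e from RingQuot.mkAlgHom K (bqRel K a b c d e) q)) * S2
        rw [mul_add, add_mul, hp, hq]
  intro z
  have := key z
  rw [sub_mul, mul_sub, this, Algebra.commutes]
end

section
/- In the algebra A_f associated to a binary quartic f = ax⁴+bx³z+cx²z²+dxz³+ez⁴, the element η = rst − tsr is central. -/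
/-- In the algebra `A_f` of a binary quartic, the element `η = rst − tsr` is central. -/
theorem bq_eta_central (K : Type*) [Field K] (h2 : (2 : K) ≠ 0) (h3 : (3 : K) ≠ 0)
    (a b c d e : K) :
    ∀ z : BQAlg K a b c d e,
      (bqR K a b c d e * bqS K a b c d e * bqT K a b c d e
        - bqT K a b c d e * bqS K a b c d e * bqR K a b c d e) * z =
      z * (bqR K a b c d e * bqS K a b c d e * bqT K a b c d e
        - bqT K a b c d e * bqS K a b c d e * bqR K a b c d e) := by
  set A := BQAlg K a b c d e with hAdef
  set R := bqR K a b c d e with hRdef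
  set S := bqS K a b c d e with hSdef
  set T := bqT K a b c d e with hTdef
  -- derive the relations in the quotient
  have mk0 : RingQuot.mkAlgHom K (bqRel K a b c d e) 0 = 0 := map_zero _
  have hRR : R * R = algebraMap K A a := by
    have h := RingQuot.mkAlgHom_rel K
      (show bqRel K a b c d e (FreeAlgebra.ι K 0 * FreeAlgebra.ι K 0 - algebraMap K _ a) 0 from
        ⟨rfl, Or.inl rfl⟩)
    rw [map_sub, map_mul, mk0, sub_eq_zero, AlgHom.commutes] at h
    exact h
  have hRS : R * S + S * R = algebraMap K A b := by
    have h := RingQuot.mkAlgHom_rel K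
      (show bqRel K a b c d e (FreeAlgebra.ι K 0 * FreeAlgebra.ι K 1
          + FreeAlgebra.ι K 1 * FreeAlgebra.ι K 0 - algebraMap K _ b) 0 from
        ⟨rfl, Or.inr (Or.inl rfl)⟩)
    rw [map_sub, map_add, map_mul, map_mul, mk0, sub_eq_zero, AlgHom.commutes] at h
    exact h
  have hST : S * T + T * S = algebraMap K A d := by
    have h := RingQuot.mkAlgHom_rel K
      (show bqRel K a b c d e (FreeAlgebra.ι K 1 * FreeAlgebra.ι K 2
          + FreeAlgebra.ι K 2 * FreeAlgebra.ι K 1 - algebraMap K _ d) 0 from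
        ⟨rfl, Or.inr (Or.inr (Or.inr (Or.inl rfl)))⟩)
    rw [map_sub, map_add, map_mul, map_mul, mk0, sub_eq_zero, AlgHom.commutes] at h
    exact h
  have hTT : T * T = algebraMap K A e := by
    have h := RingQuot.mkAlgHom_rel K
      (show bqRel K a b c d e (FreeAlgebra.ι K 2 * FreeAlgebra.ι K 2 - algebraMap K _ e) 0 from
        ⟨rfl, Or.inr (Or.inr (Or.inr (Or.inr rfl)))⟩)
    rw [map_sub, map_mul, mk0, sub_eq_zero, AlgHom.commutes] at h
    exact h
  -- solved forms
  have hSR : S * R = algebraMap K A b - R * S := by rw [← hRS]; noncomm_ring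
  have hTS : T * S = algebraMap K A d - S * T := by rw [← hST]; noncomm_ring
  have key : ∀ (p q : K) (x y : BQAlg K a b c d e),
      x * (algebraMap K A p - y) - (algebraMap K A p - y) * x
        - (algebraMap K A q - x) * y + y * (algebraMap K A q - x) = 0 := by
    intro p q x y
    rw [mul_sub, sub_mul, sub_mul, mul_sub, ← Algebra.commutes p x, ← Algebra.commutes q y]
    noncomm_ring
  set η := R * S * T - T * S * R with hη
  have hcR : η * R = R * η := by
    rw [← sub_eq_zero]
    have e1 : η * R - R * η
        = R * (S * T + T * S) * R - T * S * (R * R) - (R * R) * (S * T) := by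
      rw [hη]; noncomm_ring
    rw [e1, hST, hRR,
      show R * algebraMap K A d * R = algebraMap K A d * (R * R) by
        rw [← Algebra.commutes d R, mul_assoc],
      hRR, hTS, sub_mul, ← Algebra.commutes a (S * T)]
    noncomm_ring
  have hcS : η * S = S * η := by
    rw [← sub_eq_zero]
    have e2 : η * S - S * η
        = (R * S) * (T * S) - (T * S) * (R * S) - (S * R) * (S * T) + (S * T) * (S * R) := by
      rw [hη]; noncomm_ring
    rw [e2, hTS, hSR]
    exact key d b (R * S) (S * T)
  have hcT : η * T = T * η := by
    rw [← sub_eq_zero]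
    have e3 : η * T - T * η
        = (R * S) * (T * T) + (T * T) * (S * R) - T * (S * R + R * S) * T := by
      rw [hη]; noncomm_ring
    rw [e3, hTT, show S * R + R * S = algebraMap K A b by rw [add_comm, hRS],
      show T * algebraMap K A b * T = algebraMap K A b * (T * T) by
        rw [← Algebra.commutes b T, mul_assoc],
      hTT, hSR, ← Algebra.commutes e (R * S), mul_sub,
      Algebra.commutes b (algebraMap K A e)]
    noncomm_ring
  intro z
  obtain ⟨w, rfl⟩ := RingQuot.mkAlgHom_surjective K (bqRel K a b c d e) z
  induction w using FreeAlgebra.induction with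
  | grade0 k =>
      rw [AlgHom.commutes]
      exact (Algebra.commutes k η).symm
  | grade1 i =>
      fin_cases i
      · exact hcR
      · exact hcS
      · exact hcT
  | mul x y hx hy =>
      have gm : ∀ u v : A, η * u = u * η → η * v = v * η → η * (u * v) = u * v * η := by
        intro u v hu hv
        rw [← mul_assoc, hu, mul_assoc, hv, ← mul_assoc]
      rw [map_mul]
      exact gm _ _ hx hy
  | add x y hx hy =>
      have ga : ∀ u v : A, η * u = u * η → η * v = v * η → η * (u + v) = (u + v) * η := by
        intro u v hu hv
        rw [mul_add, add_mul, hu, hv]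
      rw [map_add]
      exact ga _ _ hx hy
end

section
/- In the algebra A_f associated to a binary quartic f = ax⁴+bx³z+cx²z²+dxz³+ez⁴, the central elements ξ = s²−c and η = rst−tsr satisfy the Weierstrass relation η² = ξ³ + cξ² − (4ae−bd)ξ − 4ace + b²e + ad². -/
section
variable (K : Type*) [Field K] (a b c d e : K)

local notation "C" => algebraMap K (BQAlg K a b c d e)

lemma bq_zero (x : FreeAlgebra K (Fin 3))
    (h : bqRel K a b c d e x 0) :
    RingQuot.mkAlgHom K (bqRel K a b c d e) x = 0 := by
  have := RingQuot.mkAlgHom_rel K h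
  simpa using this

lemma hrr : bqR K a b c d e * bqR K a b c d e = C a := by
  have := bq_zero K a b c d e _ ⟨rfl, Or.inl rfl⟩
  simp only [map_sub, map_mul, AlgHom.commutes] at this
  rw [show algebraMap K (RingQuot (bqRel K a b c d e)) = algebraMap K (BQAlg K a b c d e) from rfl] at this
  rw [bqR]; exact sub_eq_zero.mp this

lemma hsr : bqS K a b c d e * bqR K a b c d e = C b - bqR K a b c d e * bqS K a b c d e := by
  have := bq_zero K a b c d e _ ⟨rfl, Or.inr (Or.inl rfl)⟩
  simp only [map_sub, map_add, map_mul, AlgHom.commutes] at this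
  rw [show algebraMap K (RingQuot (bqRel K a b c d e)) = algebraMap K (BQAlg K a b c d e) from rfl] at this
  rw [bqR, bqS, eq_sub_iff_add_eq, add_comm]; exact sub_eq_zero.mp this

lemma htr : bqT K a b c d e * bqR K a b c d e =
    C c - bqS K a b c d e * bqS K a b c d e - bqR K a b c d e * bqT K a b c d e := by
  have := bq_zero K a b c d e _ ⟨rfl, Or.inr (Or.inr (Or.inl rfl))⟩
  simp only [map_sub, map_add, map_mul, AlgHom.commutes] at this
  rw [show algebraMap K (RingQuot (bqRel K a b c d e)) = algebraMap K (BQAlg K a b c d e) from rfl] at this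
  rw [bqR, bqS, bqT, sub_sub, eq_sub_iff_add_eq]
  have h := sub_eq_zero.mp this
  exact Eq.trans (by ac_rfl) h

lemma hts : bqT K a b c d e * bqS K a b c d e = C d - bqS K a b c d e * bqT K a b c d e := by
  have := bq_zero K a b c d e _ ⟨rfl, Or.inr (Or.inr (Or.inr (Or.inl rfl)))⟩
  simp only [map_sub, map_add, map_mul, AlgHom.commutes] at this
  rw [show algebraMap K (RingQuot (bqRel K a b c d e)) = algebraMap K (BQAlg K a b c d e) from rfl] at this
  rw [bqS, bqT, eq_sub_iff_add_eq, add_comm]; exact sub_eq_zero.mp this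

lemma htt : bqT K a b c d e * bqT K a b c d e = C e := by
  have := bq_zero K a b c d e _ ⟨rfl, Or.inr (Or.inr (Or.inr (Or.inr rfl)))⟩
  simp only [map_sub, map_mul, AlgHom.commutes] at this
  rw [show algebraMap K (RingQuot (bqRel K a b c d e)) = algebraMap K (BQAlg K a b c d e) from rfl] at this
  rw [bqT]; exact sub_eq_zero.mp this

end

section
variable (K : Type*) [Field K] (a b c d e : K)

local notation "C" => algebraMap K (BQAlg K a b c d e)
local notation "R" => bqR K a b c d e
local notation "S" => bqS K a b c d e
local notation "T" => bqT K a b c d e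

lemma hrr' (x : BQAlg K a b c d e) : R * (R * x) = C a * x := by
  rw [← mul_assoc, hrr]
lemma hsr' (x : BQAlg K a b c d e) : S * (R * x) = C b * x - R * (S * x) := by
  rw [← mul_assoc, hsr, sub_mul, mul_assoc]
lemma htr' (x : BQAlg K a b c d e) : T * (R * x) = C c * x - S * (S * x) - R * (T * x) := by
  rw [← mul_assoc, htr, sub_mul, sub_mul, mul_assoc, mul_assoc]
lemma hts' (x : BQAlg K a b c d e) : T * (S * x) = C d * x - S * (T * x) := by
  rw [← mul_assoc, hts, sub_mul, mul_assoc]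
lemma htt' (x : BQAlg K a b c d e) : T * (T * x) = C e * x := by
  rw [← mul_assoc, htt]

end


/-- The central elements `ξ = s²−c` and `η = rst−tsr` of the binary quartic algebra `A_f`
satisfy the Weierstrass relation `η² = ξ³ + cξ² − (4ae−bd)ξ − 4ace + b²e + ad²`. -/
theorem bq_weierstrass (K : Type*) [Field K] (h2 : (2 : K) ≠ 0) (h3 : (3 : K) ≠ 0)
    (a b c d e : K) :
    letI r := bqR K a b c d e
    letI s := bqS K a b c d e
    letI t := bqT K a b c d e
    letI ξ : BQAlg K a b c d e := s ^ 2 - algebraMap K _ c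
    letI η : BQAlg K a b c d e := r * s * t - t * s * r
    η ^ 2 = ξ ^ 3 + algebraMap K _ c * ξ ^ 2 - algebraMap K _ (4 * a * e - b * d) * ξ
      - algebraMap K _ (4 * a * c * e) + algebraMap K _ (b ^ 2 * e)
      + algebraMap K _ (a * d ^ 2) := by
  simp only [pow_succ, pow_zero, one_mul, mul_sub, sub_mul, mul_add, add_mul, mul_assoc,
    hrr K a b c d e, hsr K a b c d e, htr K a b c d e, hts K a b c d e, htt K a b c d e,
    hrr' K a b c d e, hsr' K a b c d e, htr' K a b c d e, hts' K a b c d e, htt' K a b c d e,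
    Algebra.algebraMap_eq_smul_one, smul_mul_assoc, mul_smul_comm, smul_smul, one_mul, mul_one,
    map_sub, map_mul, map_add, map_pow]
  module
end

section
/- There is a well-defined K-derivation D : A_f → A_f on the binary quartic algebra A_f determined by D(r) = sr−rs, D(s) = tr−rt, D(t) = 0; i.e., these assignments on generators annihilate the defining ideal of A_f. -/
section Aux
variable {R : Type*} [Ring R]

theorem bqAux1 {r s α : R} (hα : ∀ x : R, α * x = x * α) (h : r * r = α) :
    r * (s * r - r * s) + (s * r - r * s) * r = 0 := by
  have key : r * (s * r - r * s) + (s * r - r * s) * r = s * (r * r) - (r * r) * s := by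
    noncomm_ring
  rw [key, h, hα, sub_self]

theorem bqAuxSwap {r s β : R} (hβ : ∀ x : R, β * x = x * β) (h : r * s + s * r = β) :
    r * (s * s) = (s * s) * r := by
  have h1 : r * s = β - s * r := eq_sub_of_add_eq h
  calc r * (s * s) = (r * s) * s := by rw [mul_assoc]
    _ = (β - s * r) * s := by rw [h1]
    _ = β * s - s * (r * s) := by noncomm_ring
    _ = s * β - s * (β - s * r) := by rw [hβ, h1]
    _ = (s * s) * r := by noncomm_ring

theorem bqAux2 {r s t α β : R} (hα : ∀ x : R, α * x = x * α) (hβ : ∀ x : R, β * x = x * β)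
    (h1 : r * r = α) (h2 : r * s + s * r = β) :
    r * (t * r - r * t) + (s * r - r * s) * s + (s * (s * r - r * s) + (t * r - r * t) * r)
      = 0 := by
  have key : r * (t * r - r * t) + (s * r - r * s) * s + (s * (s * r - r * s)
        + (t * r - r * t) * r)
      = (t * (r * r) - (r * r) * t) + ((s * s) * r - r * (s * s)) := by noncomm_ring
  rw [key, h1, bqAuxSwap hβ h2, hα, sub_self, sub_self, add_zero]

theorem bqAux3 {r s t δ : R} (hδ : ∀ x : R, δ * x = x * δ) (h : s * t + t * s = δ) :
    (s * r - r * s) * t + t * (s * r - r * s) + (s * (t * r - r * t) + (t * r - r * t) * s)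
      = 0 := by
  have key : (s * r - r * s) * t + t * (s * r - r * s) + (s * (t * r - r * t)
        + (t * r - r * t) * s)
      = (t * s + s * t) * r - r * (s * t + t * s) := by noncomm_ring
  rw [key, add_comm (t * s), h, hδ, sub_self]

theorem bqAux4 {r t ε : R} (hε : ∀ x : R, ε * x = x * ε) (h : t * t = ε) :
    (t * r - r * t) * t + t * (t * r - r * t) = 0 := by
  have key : (t * r - r * t) * t + t * (t * r - r * t) = (t * t) * r - r * (t * t) := by
    noncomm_ring
  rw [key, h, hε, sub_self]

end Aux

section Build
variable (K : Type*) [Field K] (a b c d e : K)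
open TrivSqZeroExt

theorem bqR_def : RingQuot.mkAlgHom K (bqRel K a b c d e) (FreeAlgebra.ι K 0)
    = bqR K a b c d e := rfl
theorem bqS_def : RingQuot.mkAlgHom K (bqRel K a b c d e) (FreeAlgebra.ι K 1)
    = bqS K a b c d e := rfl
theorem bqT_def : RingQuot.mkAlgHom K (bqRel K a b c d e) (FreeAlgebra.ι K 2)
    = bqT K a b c d e := rfl

theorem bq_rel1 : bqR K a b c d e * bqR K a b c d e = algebraMap K _ a := by
  have h := RingQuot.mkAlgHom_rel K (s := bqRel K a b c d e)
    (x := FreeAlgebra.ι K 0 * FreeAlgebra.ι K 0 - algebraMap K _ a) (y := 0) ⟨rfl, Or.inl rfl⟩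
  rw [map_sub, map_mul, map_zero, AlgHom.commutes, sub_eq_zero] at h
  exact h

theorem bq_rel2 : bqR K a b c d e * bqS K a b c d e + bqS K a b c d e * bqR K a b c d e
    = algebraMap K _ b := by
  have h := RingQuot.mkAlgHom_rel K (s := bqRel K a b c d e)
    (x := FreeAlgebra.ι K 0 * FreeAlgebra.ι K 1 + FreeAlgebra.ι K 1 * FreeAlgebra.ι K 0
      - algebraMap K _ b) (y := 0) ⟨rfl, Or.inr (Or.inl rfl)⟩
  rw [map_sub, map_add, map_mul, map_mul, map_zero, AlgHom.commutes, sub_eq_zero] at h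
  exact h

theorem bq_rel3 : bqR K a b c d e * bqT K a b c d e + bqT K a b c d e * bqR K a b c d e
    + bqS K a b c d e * bqS K a b c d e = algebraMap K _ c := by
  have h := RingQuot.mkAlgHom_rel K (s := bqRel K a b c d e)
    (x := FreeAlgebra.ι K 0 * FreeAlgebra.ι K 2 + FreeAlgebra.ι K 2 * FreeAlgebra.ι K 0
      + FreeAlgebra.ι K 1 * FreeAlgebra.ι K 1 - algebraMap K _ c) (y := 0)
    ⟨rfl, Or.inr (Or.inr (Or.inl rfl))⟩
  rw [map_sub, map_add, map_add, map_mul, map_mul, map_mul, map_zero, AlgHom.commutes,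
    sub_eq_zero] at h
  exact h

theorem bq_rel4 : bqS K a b c d e * bqT K a b c d e + bqT K a b c d e * bqS K a b c d e
    = algebraMap K _ d := by
  have h := RingQuot.mkAlgHom_rel K (s := bqRel K a b c d e)
    (x := FreeAlgebra.ι K 1 * FreeAlgebra.ι K 2 + FreeAlgebra.ι K 2 * FreeAlgebra.ι K 1
      - algebraMap K _ d) (y := 0) ⟨rfl, Or.inr (Or.inr (Or.inr (Or.inl rfl)))⟩
  rw [map_sub, map_add, map_mul, map_mul, map_zero, AlgHom.commutes, sub_eq_zero] at h
  exact h

theorem bq_rel5 : bqT K a b c d e * bqT K a b c d e = algebraMap K _ e := by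
  have h := RingQuot.mkAlgHom_rel K (s := bqRel K a b c d e)
    (x := FreeAlgebra.ι K 2 * FreeAlgebra.ι K 2 - algebraMap K _ e) (y := 0)
    ⟨rfl, Or.inr (Or.inr (Or.inr (Or.inr rfl)))⟩
  rw [map_sub, map_mul, map_zero, AlgHom.commutes, sub_eq_zero] at h
  exact h

noncomputable def bqDgen : Fin 3 → BQAlg K a b c d e :=
  ![bqS K a b c d e * bqR K a b c d e - bqR K a b c d e * bqS K a b c d e,
    bqT K a b c d e * bqR K a b c d e - bqR K a b c d e * bqT K a b c d e, 0]

noncomputable def bqPhi :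
    FreeAlgebra K (Fin 3) →ₐ[K] TrivSqZeroExt (BQAlg K a b c d e) (BQAlg K a b c d e) :=
  FreeAlgebra.lift K fun i =>
    TrivSqZeroExt.inl (R := BQAlg K a b c d e) (M := BQAlg K a b c d e)
      (RingQuot.mkAlgHom K (bqRel K a b c d e) (FreeAlgebra.ι K i)) +
    TrivSqZeroExt.inr (bqDgen K a b c d e i)

theorem bqPhi_rel : ∀ ⦃x y⦄, bqRel K a b c d e x y →
    bqPhi K a b c d e x = bqPhi K a b c d e y := by
  rintro x y ⟨rfl, hx | hx | hx | hx | hx⟩ <;> subst hx <;>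
    refine TrivSqZeroExt.ext ?_ ?_ <;>
    simp [bqPhi, bqDgen, fst_mul, snd_mul, op_smul_eq_mul, smul_eq_mul, algebraMap_eq_inl',
      bqR_def, bqS_def, bqT_def]
  · rw [bq_rel1, sub_self]
  · exact bqAux1 (Algebra.commutes a) (bq_rel1 K a b c d e)
  · rw [bq_rel2, sub_self]
  · exact bqAux2 (Algebra.commutes a) (Algebra.commutes b) (bq_rel1 K a b c d e)
      (bq_rel2 K a b c d e)
  · rw [bq_rel3, sub_self]
  · exact bqAux3 (Algebra.commutes d) (bq_rel4 K a b c d e)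
  · rw [bq_rel4, sub_self]
  · exact bqAux4 (Algebra.commutes e) (bq_rel5 K a b c d e)
  · rw [bq_rel5, sub_self]

noncomputable def bqDalg :
    BQAlg K a b c d e →ₐ[K] TrivSqZeroExt (BQAlg K a b c d e) (BQAlg K a b c d e) :=
  RingQuot.liftAlgHom K ⟨bqPhi K a b c d e, bqPhi_rel K a b c d e⟩

theorem bqDalg_mk (x : FreeAlgebra K (Fin 3)) :
    bqDalg K a b c d e (RingQuot.mkAlgHom K (bqRel K a b c d e) x) = bqPhi K a b c d e x := by
  rw [bqDalg]
  exact RingQuot.liftAlgHom_mkAlgHom_apply _ _ _ _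

theorem bqDalg_fst (x : BQAlg K a b c d e) : (bqDalg K a b c d e x).fst = x := by
  have h : (TrivSqZeroExt.fstHom K (BQAlg K a b c d e) (BQAlg K a b c d e)).comp
      (bqDalg K a b c d e) = AlgHom.id K (BQAlg K a b c d e) := by
    apply RingQuot.ringQuot_ext'
    apply FreeAlgebra.hom_ext
    funext i
    show (TrivSqZeroExt.fstHom K (BQAlg K a b c d e) (BQAlg K a b c d e))
        (bqDalg K a b c d e (RingQuot.mkAlgHom K (bqRel K a b c d e) (FreeAlgebra.ι K i)))
      = AlgHom.id K (BQAlg K a b c d e) (RingQuot.mkAlgHom K (bqRel K a b c d e)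
        (FreeAlgebra.ι K i))
    rw [bqDalg_mk]
    simp [bqPhi]
    rfl
  exact AlgHom.congr_fun h x

end Build


/-- There is a well-defined `K`-derivation `D : A_f → A_f` on the binary quartic algebra
determined by `D r = sr − rs`, `D s = tr − rt`, `D t = 0`. -/
theorem bq_derivation_exists (K : Type*) [Field K] (h2 : (2 : K) ≠ 0) (h3 : (3 : K) ≠ 0)
    (a b c d e : K) :
    ∃ D : BQAlg K a b c d e →ₗ[K] BQAlg K a b c d e,
      (∀ x y : BQAlg K a b c d e, D (x * y) = D x * y + x * D y) ∧
      D (bqR K a b c d e) = bqS K a b c d e * bqR K a b c d e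
          - bqR K a b c d e * bqS K a b c d e ∧
      D (bqS K a b c d e) = bqT K a b c d e * bqR K a b c d e
          - bqR K a b c d e * bqT K a b c d e ∧
      D (bqT K a b c d e) = 0 := by
  refine ⟨{ toFun := fun x => (bqDalg K a b c d e x).snd
            map_add' := by intro x y; simp
            map_smul' := by intro k x; simp }, ?_, ?_, ?_, ?_⟩
  · intro x y
    simp only [LinearMap.coe_mk, AddHom.coe_mk, map_mul, TrivSqZeroExt.snd_mul,
      op_smul_eq_mul, smul_eq_mul, bqDalg_fst]
    rw [add_comm]
  · show (bqDalg K a b c d e (bqR K a b c d e)).snd = _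
    rw [bqR, bqDalg_mk]
    simp [bqPhi, bqDgen, bqR_def, bqS_def, bqT_def]
  · show (bqDalg K a b c d e (bqS K a b c d e)).snd = _
    rw [bqS, bqDalg_mk]
    simp [bqPhi, bqDgen, bqR_def, bqS_def, bqT_def]
  · show (bqDalg K a b c d e (bqT K a b c d e)).snd = _
    rw [bqT, bqDalg_mk]
    simp [bqPhi, bqDgen, bqR_def, bqS_def, bqT_def]
end

section
/- The derivation D on A_f (binary quartic case) determined by D(r)=[s,r], D(s)=[t,r], D(t)=0 acts on the central elements ξ = s²−c, η = rst−tsr by Dξ = 2η and Dη = 3ξ² + 2cξ − (4ae − bd). -/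
section BQAux

variable {K : Type*} [Field K] (a b c d e : K)

lemma bq_rr : bqR K a b c d e * bqR K a b c d e = a • 1 := by
  have := RingQuot.mkAlgHom_rel (S := K) (s := bqRel K a b c d e)
    (show bqRel K a b c d e _ 0 from ⟨rfl, Or.inl rfl⟩)
  simp only [map_sub, map_mul, AlgHom.commutes, map_zero, sub_eq_zero] at this
  rw [bqR]
  exact this.trans (Algebra.algebraMap_eq_smul_one a)

lemma bq_sr : bqS K a b c d e * bqR K a b c d e = b • 1 - bqR K a b c d e * bqS K a b c d e := by
  have := RingQuot.mkAlgHom_rel (S := K) (s := bqRel K a b c d e)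
    (show bqRel K a b c d e _ 0 from ⟨rfl, Or.inr (Or.inl rfl)⟩)
  simp only [map_sub, map_add, map_mul, AlgHom.commutes, map_zero, sub_eq_zero] at this
  rw [bqR, bqS, eq_sub_iff_add_eq, add_comm]
  exact this.trans (Algebra.algebraMap_eq_smul_one b)

lemma bq_tr : bqT K a b c d e * bqR K a b c d e
    = c • 1 - bqS K a b c d e * bqS K a b c d e - bqR K a b c d e * bqT K a b c d e := by
  have := RingQuot.mkAlgHom_rel (S := K) (s := bqRel K a b c d e)
    (show bqRel K a b c d e _ 0 from ⟨rfl, Or.inr (Or.inr (Or.inl rfl))⟩)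
  simp only [map_sub, map_add, map_mul, AlgHom.commutes, map_zero, sub_eq_zero] at this
  have this' : bqR K a b c d e * bqT K a b c d e + bqT K a b c d e * bqR K a b c d e
      + bqS K a b c d e * bqS K a b c d e = algebraMap K (BQAlg K a b c d e) c := this
  rw [eq_sub_iff_add_eq, eq_sub_iff_add_eq, ← Algebra.algebraMap_eq_smul_one, ← this']
  abel

lemma bq_ts : bqT K a b c d e * bqS K a b c d e = d • 1 - bqS K a b c d e * bqT K a b c d e := by
  have := RingQuot.mkAlgHom_rel (S := K) (s := bqRel K a b c d e)
    (show bqRel K a b c d e _ 0 from ⟨rfl, Or.inr (Or.inr (Or.inr (Or.inl rfl)))⟩)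
  simp only [map_sub, map_add, map_mul, AlgHom.commutes, map_zero, sub_eq_zero] at this
  rw [bqS, bqT, eq_sub_iff_add_eq, add_comm]
  exact this.trans (Algebra.algebraMap_eq_smul_one d)

lemma bq_tt : bqT K a b c d e * bqT K a b c d e = e • 1 := by
  have := RingQuot.mkAlgHom_rel (S := K) (s := bqRel K a b c d e)
    (show bqRel K a b c d e _ 0 from ⟨rfl, Or.inr (Or.inr (Or.inr (Or.inr rfl)))⟩)
  simp only [map_sub, map_mul, AlgHom.commutes, map_zero, sub_eq_zero] at this
  rw [bqT]
  exact this.trans (Algebra.algebraMap_eq_smul_one e)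

end BQAux

section BQAbstract

variable {K : Type*} [Field K] {R : Type*} [Ring R] [Algebra K R]
variable (a b c d e : K) (r s t : R)

theorem bq_keycalc1
    (hrr : r * r = a • 1) (hsr : s * r = b • 1 - r * s)
    (htr : t * r = c • 1 - s * s - r * t) (hts : t * s = d • 1 - s * t)
    (htt : t * t = e • 1) :
    (t*r - r*t)*s + s*(t*r - r*t) = (2:K) • (r*s*t - t*s*r) := by
  have hrr' : ∀ x : R, r*(r*x) = a • x := fun x => by
    rw [← mul_assoc, hrr, smul_mul_assoc, one_mul]
  have hsr' : ∀ x : R, s*(r*x) = b • x - r*(s*x) := fun x => by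
    rw [← mul_assoc, hsr, sub_mul, smul_mul_assoc, one_mul, mul_assoc]
  have htr' : ∀ x : R, t*(r*x) = c • x - s*(s*x) - r*(t*x) := fun x => by
    rw [← mul_assoc, htr, sub_mul, sub_mul, smul_mul_assoc, one_mul, mul_assoc, mul_assoc]
  have hts' : ∀ x : R, t*(s*x) = d • x - s*(t*x) := fun x => by
    rw [← mul_assoc, hts, sub_mul, smul_mul_assoc, one_mul, mul_assoc]
  have htt' : ∀ x : R, t*(t*x) = e • x := fun x => by
    rw [← mul_assoc, htt, smul_mul_assoc, one_mul]
  simp only [mul_sub, sub_mul, mul_add, add_mul, mul_assoc, smul_sub, smul_add,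
    mul_smul_comm, smul_mul_assoc, smul_smul, mul_one, one_mul,
    hrr, hsr, htr, hts, htt, hrr', hsr', htr', hts', htt', two_smul]
  module

theorem bq_keycalc2
    (hrr : r * r = a • 1) (hsr : s * r = b • 1 - r * s)
    (htr : t * r = c • 1 - s * s - r * t) (hts : t * s = d • 1 - s * t)
    (htt : t * t = e • 1) :
    (s*r - r*s)*(s*t) + r*((t*r - r*t)*t) - t*((t*r - r*t)*r + s*(s*r - r*s))
      = (3:K) • ((s*s - c • 1) * (s*s - c • 1)) + (2*c) • (s*s - c • 1)
        - (4*a*e - b*d) • 1 := by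
  have hrr' : ∀ x : R, r*(r*x) = a • x := fun x => by
    rw [← mul_assoc, hrr, smul_mul_assoc, one_mul]
  have hsr' : ∀ x : R, s*(r*x) = b • x - r*(s*x) := fun x => by
    rw [← mul_assoc, hsr, sub_mul, smul_mul_assoc, one_mul, mul_assoc]
  have htr' : ∀ x : R, t*(r*x) = c • x - s*(s*x) - r*(t*x) := fun x => by
    rw [← mul_assoc, htr, sub_mul, sub_mul, smul_mul_assoc, one_mul, mul_assoc, mul_assoc]
  have hts' : ∀ x : R, t*(s*x) = d • x - s*(t*x) := fun x => by
    rw [← mul_assoc, hts, sub_mul, smul_mul_assoc, one_mul, mul_assoc]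
  have htt' : ∀ x : R, t*(t*x) = e • x := fun x => by
    rw [← mul_assoc, htt, smul_mul_assoc, one_mul]
  simp only [mul_sub, sub_mul, mul_add, add_mul, mul_assoc, smul_sub, smul_add,
    mul_smul_comm, smul_mul_assoc, smul_smul, mul_one, one_mul,
    hrr, hsr, htr, hts, htt, hrr', hsr', htr', hts', htt']
  module

end BQAbstract

/-- The derivation `D` on the binary quartic algebra `A_f` determined by `D r = [s,r]`,
`D s = [t,r]`, `D t = 0` acts on the central elements `ξ = s²−c`, `η = rst−tsr` by
`Dξ = 2η` and `Dη = 3ξ² + 2cξ − (4ae−bd)`. -/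
theorem bq_derivation_on_centre (K : Type*) [Field K] (h2 : (2 : K) ≠ 0) (h3 : (3 : K) ≠ 0)
    (a b c d e : K) (D : BQAlg K a b c d e →ₗ[K] BQAlg K a b c d e)
    (hLeib : ∀ x y : BQAlg K a b c d e, D (x * y) = D x * y + x * D y)
    (hr : D (bqR K a b c d e) = bqS K a b c d e * bqR K a b c d e
        - bqR K a b c d e * bqS K a b c d e)
    (hs : D (bqS K a b c d e) = bqT K a b c d e * bqR K a b c d e
        - bqR K a b c d e * bqT K a b c d e)
    (ht : D (bqT K a b c d e) = 0) :
    letI r := bqR K a b c d e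
    letI s := bqS K a b c d e
    letI t := bqT K a b c d e
    letI ξ : BQAlg K a b c d e := s ^ 2 - algebraMap K _ c
    letI η : BQAlg K a b c d e := r * s * t - t * s * r
    D ξ = 2 * η ∧
      D η = 3 * ξ ^ 2 + algebraMap K _ (2 * c) * ξ - algebraMap K _ (4 * a * e - b * d) := by
  set r := bqR K a b c d e with hrdef
  set s := bqS K a b c d e with hsdef
  set t := bqT K a b c d e with htdef
  have hD1 : D 1 = 0 := by
    have h := hLeib 1 1
    simp only [mul_one, one_mul] at h
    exact (right_eq_add.mp h)
  have hDalg : ∀ k : K, D (algebraMap K (BQAlg K a b c d e) k) = 0 := by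
    intro k
    rw [Algebra.algebraMap_eq_smul_one, map_smul, hD1, smul_zero]
  have Hrr := bq_rr a b c d e
  have Hsr := bq_sr a b c d e
  have Htr := bq_tr a b c d e
  have Hts := bq_ts a b c d e
  have Htt := bq_tt a b c d e
  constructor
  · have h1 : D (s ^ 2 - algebraMap K (BQAlg K a b c d e) c)
        = (t*r - r*t)*s + s*(t*r - r*t) := by
      rw [map_sub, hDalg, sub_zero, sq, hLeib, hs]
    rw [h1, bq_keycalc1 a b c d e r s t Hrr Hsr Htr Hts Htt,
      Algebra.smul_def, map_ofNat]
  · have h2 : D (r * s * t - t * s * r)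
        = (s*r - r*s)*(s*t) + r*((t*r - r*t)*t) - t*((t*r - r*t)*r + s*(s*r - r*s)) := by
      rw [map_sub, mul_assoc, hLeib r (s*t), hLeib s t, hr, hs, ht, mul_zero, add_zero,
        mul_assoc, hLeib t (s*r), hLeib s r, ht, zero_mul, zero_add, hs, hr]
    rw [h2, bq_keycalc2 a b c d e r s t Hrr Hsr Htr Hts Htt]
    rw [show s ^ 2 - algebraMap K (BQAlg K a b c d e) c = s*s - c • 1 by
      rw [sq, Algebra.algebraMap_eq_smul_one]]
    rw [Algebra.smul_def (3:K), map_ofNat, sq, Algebra.smul_def (2*c),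
      Algebra.smul_def (4*a*e - b*d), mul_one]
end

section
/- In the algebra A_f associated to a ternary cubic f with coefficients a,b,c,a₂,a₃,b₁,b₃,c₁,c₂,m (with c ≠ 0), the element ξ = c²(xy)² − (cy²+c₂y+b₃)(cx²+c₁x+a₃) + (cm−c₁c₂)xy + a₃b₃ is central. -/
/-- The relations defining the algebra `A_f` associated to the ternary cubic
`f = A x³ + B y³ + C z³ + A₂ x²y + A₃ x²z + B₁ xy² + B₃ y²z + C₁ xz² + C₂ yz² + M xyz`
(with `C ≠ 0`): the relations derive from the identity `f(α, β, αx + βy) = 0`,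
with generators `x = ι 0`, `y = ι 1`. -/
def tcRel (K : Type*) [Field K] (A B C A2 A3 B1 B3 C1 C2 M : K) :
    FreeAlgebra K (Fin 2) → FreeAlgebra K (Fin 2) → Prop := fun u v =>
  letI x := FreeAlgebra.ι K (0 : Fin 2)
  letI y := FreeAlgebra.ι K (1 : Fin 2)
  letI c : K → FreeAlgebra K (Fin 2) := algebraMap K _
  v = 0 ∧ (
    u = c C * x ^ 3 + c C1 * x ^ 2 + c A3 * x + c A ∨
    u = c C * (x ^ 2 * y + x * y * x + y * x ^ 2) + c C1 * (x * y + y * x)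
        + c C2 * x ^ 2 + c M * x + c A3 * y + c A2 ∨
    u = c C * (x * y ^ 2 + y * x * y + y ^ 2 * x) + c C2 * (x * y + y * x)
        + c C1 * y ^ 2 + c M * y + c B3 * x + c B1 ∨
    u = c C * y ^ 3 + c C2 * y ^ 2 + c B3 * y + c B)

/-- The algebra `A_f` associated to a ternary cubic. -/
def TCAlg (K : Type*) [Field K] (A B C A2 A3 B1 B3 C1 C2 M : K) :=
  RingQuot (tcRel K A B C A2 A3 B1 B3 C1 C2 M)

noncomputable instance (K : Type*) [Field K] (A B C A2 A3 B1 B3 C1 C2 M : K) :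
    Ring (TCAlg K A B C A2 A3 B1 B3 C1 C2 M) := inferInstanceAs (Ring (RingQuot _))

noncomputable instance (K : Type*) [Field K] (A B C A2 A3 B1 B3 C1 C2 M : K) :
    Algebra K (TCAlg K A B C A2 A3 B1 B3 C1 C2 M) := inferInstanceAs (Algebra K (RingQuot _))

/-- The generator `x` of the ternary cubic algebra `A_f`. -/
noncomputable def tcX (K : Type*) [Field K] (A B C A2 A3 B1 B3 C1 C2 M : K) :
    TCAlg K A B C A2 A3 B1 B3 C1 C2 M :=
  RingQuot.mkAlgHom K _ (FreeAlgebra.ι K 0)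

/-- The generator `y` of the ternary cubic algebra `A_f`. -/
noncomputable def tcY (K : Type*) [Field K] (A B C A2 A3 B1 B3 C1 C2 M : K) :
    TCAlg K A B C A2 A3 B1 B3 C1 C2 M :=
  RingQuot.mkAlgHom K _ (FreeAlgebra.ι K 1)

/-- The central element `ξ` of the ternary cubic algebra. -/
noncomputable def tcXi (K : Type*) [Field K] (A B C A2 A3 B1 B3 C1 C2 M : K) :
    TCAlg K A B C A2 A3 B1 B3 C1 C2 M :=
  letI x := tcX K A B C A2 A3 B1 B3 C1 C2 M
  letI y := tcY K A B C A2 A3 B1 B3 C1 C2 M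
  letI c : K → TCAlg K A B C A2 A3 B1 B3 C1 C2 M := algebraMap K _
  c (C ^ 2) * (x * y) ^ 2
    - (c C * y ^ 2 + c C2 * y + c B3) * (c C * x ^ 2 + c C1 * x + c A3)
    + c (C * M - C1 * C2) * (x * y) + c (A3 * B3)


section TCAux
variable {K : Type*} [Field K] {R : Type*} [Ring R] [Algebra K R]

/-- Free identity expressing `ξx - xξ` via the first two relations. -/
theorem tc_keyX (A B C A2 A3 B1 B3 C1 C2 M : K) (x y : R) :
    (C ^ 2 • (x * y) ^ 2
        - (C • y ^ 2 + C2 • y + B3 • (1 : R)) * (C • x ^ 2 + C1 • x + A3 • (1 : R))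
        + (C * M - C1 * C2) • (x * y) + (A3 * B3) • (1 : R)) * x
      - x * (C ^ 2 • (x * y) ^ 2
        - (C • y ^ 2 + C2 • y + B3 • (1 : R)) * (C • x ^ 2 + C1 • x + A3 • (1 : R))
        + (C * M - C1 * C2) • (x * y) + (A3 * B3) • (1 : R))
    = C • ((C • x ^ 3 + C1 • x ^ 2 + A3 • x + A • (1 : R)) * y ^ 2
          - y ^ 2 * (C • x ^ 3 + C1 • x ^ 2 + A3 • x + A • (1 : R)))
      + C2 • ((C • x ^ 3 + C1 • x ^ 2 + A3 • x + A • (1 : R)) * y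
          - y * (C • x ^ 3 + C1 • x ^ 2 + A3 • x + A • (1 : R)))
      + C • (x * y * (C • (x ^ 2 * y + x * y * x + y * x ^ 2) + C1 • (x * y + y * x)
              + C2 • x ^ 2 + M • x + A3 • y + A2 • (1 : R))
          - x * (C • (x ^ 2 * y + x * y * x + y * x ^ 2) + C1 • (x * y + y * x)
              + C2 • x ^ 2 + M • x + A3 • y + A2 • (1 : R)) * y) := by
  simp only [mul_add, add_mul, mul_sub, sub_mul, smul_mul_assoc, mul_smul_comm, smul_smul,
    smul_add, smul_sub, mul_assoc, mul_one, one_mul, pow_succ, pow_zero]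
  module

/-- Free identity expressing `ξy - yξ` via the second and third relations. -/
theorem tc_keyY (A B C A2 A3 B1 B3 C1 C2 M : K) (x y : R) :
    (C ^ 2 • (x * y) ^ 2
        - (C • y ^ 2 + C2 • y + B3 • (1 : R)) * (C • x ^ 2 + C1 • x + A3 • (1 : R))
        + (C * M - C1 * C2) • (x * y) + (A3 * B3) • (1 : R)) * y
      - y * (C ^ 2 • (x * y) ^ 2
        - (C • y ^ 2 + C2 • y + B3 • (1 : R)) * (C • x ^ 2 + C1 • x + A3 • (1 : R))
        + (C * M - C1 * C2) • (x * y) + (A3 * B3) • (1 : R))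
    = C • (y ^ 2 * (C • (x ^ 2 * y + x * y * x + y * x ^ 2) + C1 • (x * y + y * x)
              + C2 • x ^ 2 + M • x + A3 • y + A2 • (1 : R))
          - (2 : K) • (y * (C • (x ^ 2 * y + x * y * x + y * x ^ 2) + C1 • (x * y + y * x)
              + C2 • x ^ 2 + M • x + A3 • y + A2 • (1 : R)) * y)
          + (C • (x ^ 2 * y + x * y * x + y * x ^ 2) + C1 • (x * y + y * x)
              + C2 • x ^ 2 + M • x + A3 • y + A2 • (1 : R)) * y ^ 2)
      + C • (y * x * (C • (x * y ^ 2 + y * x * y + y ^ 2 * x) + C2 • (x * y + y * x)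
              + C1 • y ^ 2 + M • y + B3 • x + B1 • (1 : R))
          - (C • (x * y ^ 2 + y * x * y + y ^ 2 * x) + C2 • (x * y + y * x)
              + C1 • y ^ 2 + M • y + B3 • x + B1 • (1 : R)) * (y * x)
          + x * y * (C • (x * y ^ 2 + y * x * y + y ^ 2 * x) + C2 • (x * y + y * x)
              + C1 • y ^ 2 + M • y + B3 • x + B1 • (1 : R))
          - x * (C • (x * y ^ 2 + y * x * y + y ^ 2 * x) + C2 • (x * y + y * x)
              + C1 • y ^ 2 + M • y + B3 • x + B1 • (1 : R)) * y)
      + C1 • (y * (C • (x * y ^ 2 + y * x * y + y ^ 2 * x) + C2 • (x * y + y * x)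
              + C1 • y ^ 2 + M • y + B3 • x + B1 • (1 : R))
          - (C • (x * y ^ 2 + y * x * y + y ^ 2 * x) + C2 • (x * y + y * x)
              + C1 • y ^ 2 + M • y + B3 • x + B1 • (1 : R)) * y) := by
  simp only [mul_add, add_mul, mul_sub, sub_mul, smul_mul_assoc, mul_smul_comm, smul_smul,
    smul_add, smul_sub, mul_assoc, mul_one, one_mul, pow_succ, pow_zero]
  module

end TCAux

section TCRels
variable (K : Type*) [Field K] (A B C A2 A3 B1 B3 C1 C2 M : K)

local notation "X" => tcX K A B C A2 A3 B1 B3 C1 C2 M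
local notation "Y" => tcY K A B C A2 A3 B1 B3 C1 C2 M
local notation "Q" => TCAlg K A B C A2 A3 B1 B3 C1 C2 M

set_option maxRecDepth 8000

theorem tc_rel1 : C • X ^ 3 + C1 • X ^ 2 + A3 • X + A • (1 : Q) = 0 := by
  have h := RingQuot.mkAlgHom_rel K
    (show tcRel K A B C A2 A3 B1 B3 C1 C2 M
      (algebraMap K _ C * (FreeAlgebra.ι K 0) ^ 3 + algebraMap K _ C1 * (FreeAlgebra.ι K 0) ^ 2
        + algebraMap K _ A3 * (FreeAlgebra.ι K 0) + algebraMap K _ A) 0 from ⟨rfl, Or.inl rfl⟩)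
  simp only [map_add, map_mul, map_pow, map_zero, AlgHom.commutes] at h
  simp only [Algebra.smul_def, mul_one, tcX] at h ⊢
  exact h

theorem tc_rel2 : C • (X ^ 2 * Y + X * Y * X + Y * X ^ 2) + C1 • (X * Y + Y * X)
    + C2 • X ^ 2 + M • X + A3 • Y + A2 • (1 : Q) = 0 := by
  have h := RingQuot.mkAlgHom_rel K
    (show tcRel K A B C A2 A3 B1 B3 C1 C2 M
      (algebraMap K _ C * ((FreeAlgebra.ι K 0) ^ 2 * FreeAlgebra.ι K 1
          + FreeAlgebra.ι K 0 * FreeAlgebra.ι K 1 * FreeAlgebra.ι K 0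
          + FreeAlgebra.ι K 1 * (FreeAlgebra.ι K 0) ^ 2)
        + algebraMap K _ C1 * (FreeAlgebra.ι K 0 * FreeAlgebra.ι K 1
          + FreeAlgebra.ι K 1 * FreeAlgebra.ι K 0)
        + algebraMap K _ C2 * (FreeAlgebra.ι K 0) ^ 2 + algebraMap K _ M * FreeAlgebra.ι K 0
        + algebraMap K _ A3 * FreeAlgebra.ι K 1 + algebraMap K _ A2) 0
      from ⟨rfl, Or.inr (Or.inl rfl)⟩)
  simp only [map_add, map_mul, map_pow, map_zero, AlgHom.commutes] at h
  simp only [Algebra.smul_def, mul_one, tcX, tcY] at h ⊢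
  exact h

theorem tc_rel3 : C • (X * Y ^ 2 + Y * X * Y + Y ^ 2 * X) + C2 • (X * Y + Y * X)
    + C1 • Y ^ 2 + M • Y + B3 • X + B1 • (1 : Q) = 0 := by
  have h := RingQuot.mkAlgHom_rel K
    (show tcRel K A B C A2 A3 B1 B3 C1 C2 M
      (algebraMap K _ C * (FreeAlgebra.ι K 0 * (FreeAlgebra.ι K 1) ^ 2
          + FreeAlgebra.ι K 1 * FreeAlgebra.ι K 0 * FreeAlgebra.ι K 1
          + (FreeAlgebra.ι K 1) ^ 2 * FreeAlgebra.ι K 0)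
        + algebraMap K _ C2 * (FreeAlgebra.ι K 0 * FreeAlgebra.ι K 1
          + FreeAlgebra.ι K 1 * FreeAlgebra.ι K 0)
        + algebraMap K _ C1 * (FreeAlgebra.ι K 1) ^ 2 + algebraMap K _ M * FreeAlgebra.ι K 1
        + algebraMap K _ B3 * FreeAlgebra.ι K 0 + algebraMap K _ B1) 0
      from ⟨rfl, Or.inr (Or.inr (Or.inl rfl))⟩)
  simp only [map_add, map_mul, map_pow, map_zero, AlgHom.commutes] at h
  simp only [Algebra.smul_def, mul_one, tcX, tcY] at h ⊢
  exact h

theorem tc_xi_smul : tcXi K A B C A2 A3 B1 B3 C1 C2 M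
    = (C ^ 2) • (X * Y) ^ 2
      - (C • Y ^ 2 + C2 • Y + B3 • (1 : Q)) * (C • X ^ 2 + C1 • X + A3 • (1 : Q))
      + (C * M - C1 * C2) • (X * Y) + (A3 * B3) • (1 : Q) := by
  simp only [tcXi, Algebra.smul_def, mul_one]

theorem tc_xi_comm_X :
    tcXi K A B C A2 A3 B1 B3 C1 C2 M * X = X * tcXi K A B C A2 A3 B1 B3 C1 C2 M := by
  rw [← sub_eq_zero, tc_xi_smul]
  rw [tc_keyX A B C A2 A3 B1 B3 C1 C2 M X Y,
    tc_rel1 K A B C A2 A3 B1 B3 C1 C2 M, tc_rel2 K A B C A2 A3 B1 B3 C1 C2 M]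
  simp

theorem tc_xi_comm_Y :
    tcXi K A B C A2 A3 B1 B3 C1 C2 M * Y = Y * tcXi K A B C A2 A3 B1 B3 C1 C2 M := by
  rw [← sub_eq_zero, tc_xi_smul]
  rw [tc_keyY A B C A2 A3 B1 B3 C1 C2 M X Y,
    tc_rel2 K A B C A2 A3 B1 B3 C1 C2 M, tc_rel3 K A B C A2 A3 B1 B3 C1 C2 M]
  simp

end TCRels

/-- In the algebra `A_f` associated to a ternary cubic with `C ≠ 0`, the element
`ξ = C²(xy)² − (Cy²+C₂y+B₃)(Cx²+C₁x+A₃) + (CM−C₁C₂)xy + A₃B₃` is central. -/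
theorem tc_xi_central (K : Type*) [Field K] (h2 : (2 : K) ≠ 0) (h3 : (3 : K) ≠ 0)
    (A B C A2 A3 B1 B3 C1 C2 M : K) (hC : C ≠ 0) :
    ∀ z : TCAlg K A B C A2 A3 B1 B3 C1 C2 M,
      tcXi K A B C A2 A3 B1 B3 C1 C2 M * z = z * tcXi K A B C A2 A3 B1 B3 C1 C2 M := by
  intro z
  obtain ⟨w, rfl⟩ := RingQuot.mkAlgHom_surjective K (tcRel K A B C A2 A3 B1 B3 C1 C2 M) z
  induction w using FreeAlgebra.induction with
  | grade0 r => rw [AlgHom.commutes]; exact (Algebra.commutes (A := RingQuot (tcRel K A B C A2 A3 B1 B3 C1 C2 M)) r _).symm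
  | grade1 i =>
    fin_cases i
    · exact tc_xi_comm_X K A B C A2 A3 B1 B3 C1 C2 M
    · exact tc_xi_comm_Y K A B C A2 A3 B1 B3 C1 C2 M
  | mul u v hu hv =>
    rw [map_mul]; exact Commute.mul_right hu hv
  | add u v hu hv =>
    rw [map_add]; exact Commute.add_right hu hv
end

section
/- There is a well-defined K-derivation D : A_f → A_f on the ternary cubic algebra A_f determined by D(x) = c[xy,x] and D(y) = c[y,yx]; i.e., these assignments annihilate the defining ideal of A_f. -/
set_option maxHeartbeats 2000000 in
/-- There is a well-defined `K`-derivation `D` on the ternary cubic algebra `A_f`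
determined by `D x = C[xy,x]` and `D y = C[y,yx]`. -/
theorem tc_derivation_exists (K : Type*) [Field K] (h2 : (2 : K) ≠ 0) (h3 : (3 : K) ≠ 0)
    (A B C A2 A3 B1 B3 C1 C2 M : K) (hC : C ≠ 0) :
    letI x := tcX K A B C A2 A3 B1 B3 C1 C2 M
    letI y := tcY K A B C A2 A3 B1 B3 C1 C2 M
    ∃ D : TCAlg K A B C A2 A3 B1 B3 C1 C2 M →ₗ[K] TCAlg K A B C A2 A3 B1 B3 C1 C2 M,
      (∀ u v, D (u * v) = D u * v + u * D v) ∧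
      D x = algebraMap K _ C * ((x * y) * x - x * (x * y)) ∧
      D y = algebraMap K _ C * (y * (y * x) - (y * x) * y) := by
  set R := TCAlg K A B C A2 A3 B1 B3 C1 C2 M with hR
  generalize hxg : tcX K A B C A2 A3 B1 B3 C1 C2 M = x
  generalize hyg : tcY K A B C A2 A3 B1 B3 C1 C2 M = y
  have hx : RingQuot.mkAlgHom K (tcRel K A B C A2 A3 B1 B3 C1 C2 M) (FreeAlgebra.ι K 0) = x := hxg
  have hy : RingQuot.mkAlgHom K (tcRel K A B C A2 A3 B1 B3 C1 C2 M) (FreeAlgebra.ι K 1) = y := hyg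
  let dx : R := algebraMap K _ C * ((x * y) * x - x * (x * y))
  let dy : R := algebraMap K _ C * (y * (y * x) - (y * x) * y)
  let φ : FreeAlgebra K (Fin 2) →ₐ[K] TrivSqZeroExt R R :=
    FreeAlgebra.lift K ![(⟨x, dx⟩ : TrivSqZeroExt R R), ⟨y, dy⟩]
  have hφ0 : φ (FreeAlgebra.ι K 0) = TrivSqZeroExt.inl x + TrivSqZeroExt.inr dx := by
    simp [φ]
    exact TrivSqZeroExt.ext (by simp) (by simp)
  have hφ1 : φ (FreeAlgebra.ι K 1) = TrivSqZeroExt.inl y + TrivSqZeroExt.inr dy := by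
    simp [φ]
    exact TrivSqZeroExt.ext (by simp) (by simp)
  -- relation facts in R
  have erel : ∀ u v, tcRel K A B C A2 A3 B1 B3 C1 C2 M u v →
      RingQuot.mkAlgHom K (tcRel K A B C A2 A3 B1 B3 C1 C2 M) u = RingQuot.mkAlgHom K _ v :=
    fun u v h => RingQuot.mkAlgHom_rel K h
  letI c : K → R := algebraMap K R
  have e1 : c C * x ^ 3 + c C1 * x ^ 2 + c A3 * x + c A = 0 := by
    have := erel _ 0 ⟨rfl, Or.inl rfl⟩
    simp [hx, map_add, map_mul, map_pow] at this
    exact this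
  have e2 : c C * (x ^ 2 * y + x * y * x + y * x ^ 2) + c C1 * (x * y + y * x)
      + c C2 * x ^ 2 + c M * x + c A3 * y + c A2 = 0 := by
    have := erel _ 0 ⟨rfl, Or.inr (Or.inl rfl)⟩
    simp [hx, hy, map_add, map_mul, map_pow] at this
    exact this
  have e3 : c C * (x * y ^ 2 + y * x * y + y ^ 2 * x) + c C2 * (x * y + y * x)
      + c C1 * y ^ 2 + c M * y + c B3 * x + c B1 = 0 := by
    have := erel _ 0 ⟨rfl, Or.inr (Or.inr (Or.inl rfl))⟩
    simp [hx, hy, map_add, map_mul, map_pow] at this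
    exact this
  have e4 : c C * y ^ 3 + c C2 * y ^ 2 + c B3 * y + c B = 0 := by
    have := erel _ 0 ⟨rfl, Or.inr (Or.inr (Or.inr rfl))⟩
    simp [hy, map_add, map_mul, map_pow] at this
    exact this
  have hcompat : ∀ ⦃u v : FreeAlgebra K (Fin 2)⦄,
      tcRel K A B C A2 A3 B1 B3 C1 C2 M u v → φ u = φ v := by
    rintro u v ⟨rfl, rfl | rfl | rfl | rfl⟩ <;> rw [map_zero] <;>
      (refine TrivSqZeroExt.ext ?_ ?_ <;>
        simp only [pow_succ, pow_zero, one_mul, map_add, map_mul, AlgHom.commutes, hφ0, hφ1,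
          TrivSqZeroExt.algebraMap_eq_inl',
          TrivSqZeroExt.fst_add, TrivSqZeroExt.snd_add, TrivSqZeroExt.fst_mul,
          TrivSqZeroExt.snd_mul, TrivSqZeroExt.fst_inl, TrivSqZeroExt.snd_inl,
          TrivSqZeroExt.fst_zero, TrivSqZeroExt.snd_zero,
          TrivSqZeroExt.fst_mk, TrivSqZeroExt.snd_mk, TrivSqZeroExt.fst_inr, TrivSqZeroExt.snd_inr,
          zero_mul, mul_zero, add_zero, zero_add,
          smul_eq_mul, MulOpposite.smul_eq_mul_unop, MulOpposite.unop_op])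
    · simpa [pow_succ] using e1
    · have hcert : (algebraMap K R) C * ((x*y) * ((algebraMap K R) C * x^3 + (algebraMap K R) C1 * x^2 + (algebraMap K R) A3 * x + (algebraMap K R) A)
          - ((algebraMap K R) C * x^3 + (algebraMap K R) C1 * x^2 + (algebraMap K R) A3 * x + (algebraMap K R) A) * (x*y)) = 0 := by
        rw [e1]; simp
      rw [← hcert]
      simp only [pow_succ, pow_zero, one_mul, dx, Algebra.algebraMap_eq_smul_one, smul_mul_assoc, mul_smul_comm, one_mul,
        mul_one, smul_smul, mul_add, add_mul, mul_sub, sub_mul, mul_assoc]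
      match_scalars <;> ring
    · simpa [pow_succ] using e2
    · have hcert : (algebraMap K R) C * ((y*y) * ((algebraMap K R) C * x^3 + (algebraMap K R) C1 * x^2 + (algebraMap K R) A3 * x + (algebraMap K R) A)
          - ((algebraMap K R) C * x^3 + (algebraMap K R) C1 * x^2 + (algebraMap K R) A3 * x + (algebraMap K R) A) * (y*y)
          + (x*y) * ((algebraMap K R) C * (x ^ 2 * y + x * y * x + y * x ^ 2) + (algebraMap K R) C1 * (x * y + y * x)
              + (algebraMap K R) C2 * x ^ 2 + (algebraMap K R) M * x + (algebraMap K R) A3 * y + (algebraMap K R) A2)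
          - ((algebraMap K R) C * (x ^ 2 * y + x * y * x + y * x ^ 2) + (algebraMap K R) C1 * (x * y + y * x)
              + (algebraMap K R) C2 * x ^ 2 + (algebraMap K R) M * x + (algebraMap K R) A3 * y + (algebraMap K R) A2) * (x*y)) = 0 := by
        rw [e1, e2]; simp
      rw [← hcert]
      simp only [pow_succ, pow_zero, one_mul, dx, dy, Algebra.algebraMap_eq_smul_one, smul_mul_assoc, mul_smul_comm, one_mul,
        mul_one, smul_smul, mul_add, add_mul, mul_sub, sub_mul, mul_assoc]
      match_scalars <;> ring
    · simpa [pow_succ] using e3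
    · have hcert : (algebraMap K R) C * ((y*y) * ((algebraMap K R) C * (x ^ 2 * y + x * y * x + y * x ^ 2) + (algebraMap K R) C1 * (x * y + y * x)
              + (algebraMap K R) C2 * x ^ 2 + (algebraMap K R) M * x + (algebraMap K R) A3 * y + (algebraMap K R) A2)
          - ((algebraMap K R) C * (x ^ 2 * y + x * y * x + y * x ^ 2) + (algebraMap K R) C1 * (x * y + y * x)
              + (algebraMap K R) C2 * x ^ 2 + (algebraMap K R) M * x + (algebraMap K R) A3 * y + (algebraMap K R) A2) * (y*y)
          + (x*y) * ((algebraMap K R) C * (x * y ^ 2 + y * x * y + y ^ 2 * x) + (algebraMap K R) C2 * (x * y + y * x)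
              + (algebraMap K R) C1 * y ^ 2 + (algebraMap K R) M * y + (algebraMap K R) B3 * x + (algebraMap K R) B1)
          - ((algebraMap K R) C * (x * y ^ 2 + y * x * y + y ^ 2 * x) + (algebraMap K R) C2 * (x * y + y * x)
              + (algebraMap K R) C1 * y ^ 2 + (algebraMap K R) M * y + (algebraMap K R) B3 * x + (algebraMap K R) B1) * (x*y)) = 0 := by
        rw [e2, e3]; simp
      rw [← hcert]
      simp only [pow_succ, pow_zero, one_mul, dx, dy, Algebra.algebraMap_eq_smul_one, smul_mul_assoc, mul_smul_comm, one_mul,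
        mul_one, smul_smul, mul_add, add_mul, mul_sub, sub_mul, mul_assoc]
      match_scalars <;> ring
    · simpa [pow_succ] using e4
    · have hcert : (algebraMap K R) C * ((y*y) * ((algebraMap K R) C * (x * y ^ 2 + y * x * y + y ^ 2 * x) + (algebraMap K R) C2 * (x * y + y * x)
              + (algebraMap K R) C1 * y ^ 2 + (algebraMap K R) M * y + (algebraMap K R) B3 * x + (algebraMap K R) B1)
          - ((algebraMap K R) C * (x * y ^ 2 + y * x * y + y ^ 2 * x) + (algebraMap K R) C2 * (x * y + y * x)
              + (algebraMap K R) C1 * y ^ 2 + (algebraMap K R) M * y + (algebraMap K R) B3 * x + (algebraMap K R) B1) * (y*y)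
          + (x*y) * ((algebraMap K R) C * y^3 + (algebraMap K R) C2 * y^2 + (algebraMap K R) B3 * y + (algebraMap K R) B)
          - ((algebraMap K R) C * y^3 + (algebraMap K R) C2 * y^2 + (algebraMap K R) B3 * y + (algebraMap K R) B) * (x*y)) = 0 := by
        rw [e3, e4]; simp
      rw [← hcert]
      simp only [pow_succ, pow_zero, one_mul, dx, dy, Algebra.algebraMap_eq_smul_one, smul_mul_assoc, mul_smul_comm, one_mul,
        mul_one, smul_smul, mul_add, add_mul, mul_sub, sub_mul, mul_assoc]
      match_scalars <;> ring
  let D' : R →ₐ[K] TrivSqZeroExt R R := RingQuot.liftAlgHom K ⟨φ, hcompat⟩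
  have hD' : ∀ w, D' (RingQuot.mkAlgHom K (tcRel K A B C A2 A3 B1 B3 C1 C2 M) w) = φ w :=
    fun w => RingQuot.liftAlgHom_mkAlgHom_apply K _ _ _
  have hfst : ∀ a : R, (D' a).fst = a := by
    intro a
    obtain ⟨w, rfl⟩ := RingQuot.mkAlgHom_surjective K _ a
    rw [hD']
    induction w using FreeAlgebra.induction with
    | grade0 k => simp only [AlgHom.commutes, TrivSqZeroExt.algebraMap_eq_inl', TrivSqZeroExt.fst_inl]; rfl
    | grade1 i =>
      fin_cases i
      · show (φ (FreeAlgebra.ι K 0)).fst = _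
        rw [hφ0, TrivSqZeroExt.fst_add, TrivSqZeroExt.fst_inl, TrivSqZeroExt.fst_inr, add_zero, ← hx]; rfl
      · show (φ (FreeAlgebra.ι K 1)).fst = _
        rw [hφ1, TrivSqZeroExt.fst_add, TrivSqZeroExt.fst_inl, TrivSqZeroExt.fst_inr, add_zero, ← hy]; rfl
    | mul a b iha ihb => rw [map_mul, map_mul, TrivSqZeroExt.fst_mul, iha, ihb]; rfl
    | add a b iha ihb => rw [map_add, map_add, TrivSqZeroExt.fst_add, iha, ihb]; rfl
  refine ⟨(TrivSqZeroExt.sndHom R R).restrictScalars K ∘ₗ D'.toLinearMap, ?_, ?_, ?_⟩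
  · intro u v
    simp only [LinearMap.comp_apply, AlgHom.toLinearMap_apply, LinearMap.coe_restrictScalars,
      TrivSqZeroExt.sndHom_apply, map_mul, TrivSqZeroExt.snd_mul, smul_eq_mul,
      MulOpposite.smul_eq_mul_unop, MulOpposite.unop_op, hfst]
    rw [add_comm]
  · show (D' x).snd = _
    rw [← hxg]
    show (D' (RingQuot.mkAlgHom K (tcRel K A B C A2 A3 B1 B3 C1 C2 M) (FreeAlgebra.ι K 0))).snd = _
    rw [hD', hφ0, TrivSqZeroExt.snd_add, TrivSqZeroExt.snd_inl, TrivSqZeroExt.snd_inr, zero_add]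
    rw [hxg]
  · show (D' y).snd = _
    rw [← hyg]
    show (D' (RingQuot.mkAlgHom K (tcRel K A B C A2 A3 B1 B3 C1 C2 M) (FreeAlgebra.ι K 1))).snd = _
    rw [hD', hφ1, TrivSqZeroExt.snd_add, TrivSqZeroExt.snd_inl, TrivSqZeroExt.snd_inr, zero_add]
    rw [hyg]
end

section
/- Let f and f' be binary quartics with f'(x,z) = λ²f(m₁₁x+m₂₁z, m₁₂x+m₂₂z) for λ ∈ K^× and M = (m_{ij}) ∈ GL₂(K). Then the map ψ : A_{f'} → A_f given by r ↦ λ(m₁₁²r + m₁₁m₁₂s + m₁₂²t), s ↦ λ(2m₁₁m₂₁r + (m₁₁m₂₂+m₁₂m₂₁)s + 2m₁₂m₂₂t), t ↦ λ(m₂₁²r + m₂₁m₂₂s + m₂₂²t) is a well-defined K-algebra isomorphism. -/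
section BQAux

variable {K : Type*} [Field K]

theorem bq_rel_stable {A : Type*} [Ring A] [Algebra K A] (R S T : A)
    (a b c d e lam m₁₁ m₁₂ m₂₁ m₂₂ a' b' c' d' e' : K)
    (hRR : R * R = algebraMap K A a)
    (hRS : R * S + S * R = algebraMap K A b)
    (hCC : R * T + T * R + S * S = algebraMap K A c)
    (hST : S * T + T * S = algebraMap K A d)
    (hTT : T * T = algebraMap K A e)
    (ha' : a' = lam^2*(a*m₁₁^4 + b*m₁₁^3*m₁₂ + c*m₁₁^2*m₁₂^2 + d*m₁₁*m₁₂^3 + e*m₁₂^4))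
    (hb' : b' = lam^2*(4*a*m₁₁^3*m₂₁ + b*(3*m₁₁^2*m₁₂*m₂₁ + m₁₁^3*m₂₂) + c*(2*m₁₁*m₁₂^2*m₂₁ + 2*m₁₁^2*m₁₂*m₂₂) + d*(m₁₂^3*m₂₁ + 3*m₁₁*m₁₂^2*m₂₂) + 4*e*m₁₂^3*m₂₂))
    (hc' : c' = lam^2*(6*a*m₁₁^2*m₂₁^2 + b*(3*m₁₁*m₁₂*m₂₁^2 + 3*m₁₁^2*m₂₁*m₂₂) + c*(m₁₂^2*m₂₁^2 + 4*m₁₁*m₁₂*m₂₁*m₂₂ + m₁₁^2*m₂₂^2) + d*(3*m₁₂^2*m₂₁*m₂₂ + 3*m₁₁*m₁₂*m₂₂^2) + 6*e*m₁₂^2*m₂₂^2))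
    (hd' : d' = lam^2*(4*a*m₁₁*m₂₁^3 + b*(m₁₂*m₂₁^3 + 3*m₁₁*m₂₁^2*m₂₂) + c*(2*m₁₂*m₂₁^2*m₂₂ + 2*m₁₁*m₂₁*m₂₂^2) + d*(3*m₁₂*m₂₁*m₂₂^2 + m₁₁*m₂₂^3) + 4*e*m₁₂*m₂₂^3))
    (he' : e' = lam^2*(a*m₂₁^4 + b*m₂₁^3*m₂₂ + c*m₂₁^2*m₂₂^2 + d*m₂₁*m₂₂^3 + e*m₂₂^4))
    :
    ((lam*m₁₁^2) • R + (lam*(m₁₁*m₁₂)) • S + (lam*m₁₂^2) • T) * ((lam*m₁₁^2) • R + (lam*(m₁₁*m₁₂)) • S + (lam*m₁₂^2) • T) = algebraMap K A a' ∧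
    ((lam*m₁₁^2) • R + (lam*(m₁₁*m₁₂)) • S + (lam*m₁₂^2) • T) * ((lam*(2*m₁₁*m₂₁)) • R + (lam*(m₁₁*m₂₂+m₁₂*m₂₁)) • S + (lam*(2*m₁₂*m₂₂)) • T) + ((lam*(2*m₁₁*m₂₁)) • R + (lam*(m₁₁*m₂₂+m₁₂*m₂₁)) • S + (lam*(2*m₁₂*m₂₂)) • T) * ((lam*m₁₁^2) • R + (lam*(m₁₁*m₁₂)) • S + (lam*m₁₂^2) • T) = algebraMap K A b' ∧
    ((lam*m₁₁^2) • R + (lam*(m₁₁*m₁₂)) • S + (lam*m₁₂^2) • T) * ((lam*m₂₁^2) • R + (lam*(m₂₁*m₂₂)) • S + (lam*m₂₂^2) • T) + ((lam*m₂₁^2) • R + (lam*(m₂₁*m₂₂)) • S + (lam*m₂₂^2) • T) * ((lam*m₁₁^2) • R + (lam*(m₁₁*m₁₂)) • S + (lam*m₁₂^2) • T) + ((lam*(2*m₁₁*m₂₁)) • R + (lam*(m₁₁*m₂₂+m₁₂*m₂₁)) • S + (lam*(2*m₁₂*m₂₂)) • T) * ((lam*(2*m₁₁*m₂₁)) • R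 + (lam*(m₁₁*m₂₂+m₁₂*m₂₁)) • S + (lam*(2*m₁₂*m₂₂)) • T) = algebraMap K A c' ∧
    ((lam*(2*m₁₁*m₂₁)) • R + (lam*(m₁₁*m₂₂+m₁₂*m₂₁)) • S + (lam*(2*m₁₂*m₂₂)) • T) * ((lam*m₂₁^2) • R + (lam*(m₂₁*m₂₂)) • S + (lam*m₂₂^2) • T) + ((lam*m₂₁^2) • R + (lam*(m₂₁*m₂₂)) • S + (lam*m₂₂^2) • T) * ((lam*(2*m₁₁*m₂₁)) • R + (lam*(m₁₁*m₂₂+m₁₂*m₂₁)) • S + (lam*(2*m₁₂*m₂₂)) • T) = algebraMap K A d' ∧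
    ((lam*m₂₁^2) • R + (lam*(m₂₁*m₂₂)) • S + (lam*m₂₂^2) • T) * ((lam*m₂₁^2) • R + (lam*(m₂₁*m₂₂)) • S + (lam*m₂₂^2) • T) = algebraMap K A e' := by
  refine ⟨?_, ?_, ?_, ?_, ?_⟩
  · have h1 : ((lam*m₁₁^2) • R + (lam*(m₁₁*m₁₂)) • S + (lam*m₁₂^2) • T) * ((lam*m₁₁^2) • R + (lam*(m₁₁*m₁₂)) • S + (lam*m₁₂^2) • T)
      = (lam^2*m₁₁^4) • (R*R) + (lam^2*(m₁₁^3*m₁₂)) • (R*S+S*R)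
      + (lam^2*(m₁₁^2*m₁₂^2)) • (R*T+T*R+S*S) + (lam^2*(m₁₁*m₁₂^3)) • (S*T+T*S)
      + (lam^2*m₁₂^4) • (T*T) := by
      simp only [smul_add, add_mul, mul_add, smul_mul_assoc, mul_smul_comm, smul_smul]
      match_scalars <;> ring
    rw [h1, hRR, hRS, hCC, hST, hTT]
    simp only [Algebra.smul_def, ← map_mul, ← map_add]
    exact congrArg _ (by linear_combination -ha')
  · have h1 : ((lam*m₁₁^2) • R + (lam*(m₁₁*m₁₂)) • S + (lam*m₁₂^2) • T) * ((lam*(2*m₁₁*m₂₁)) • R + (lam*(m₁₁*m₂₂+m₁₂*m₂₁)) • S + (lam*(2*m₁₂*m₂₂)) • T) + ((lam*(2*m₁₁*m₂₁)) • R + (lam*(m₁₁*m₂₂+m₁₂*m₂₁)) • S + (lam*(2*m₁₂*m₂₂)) • T) * ((lam*m₁₁^2) • R + (lam*(m₁₁*m₁₂)) • S + (lam*m₁₂^2) • T)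
      = (lam^2*(4*m₁₁^3*m₂₁)) • (R*R) + (lam^2*(3*m₁₁^2*m₁₂*m₂₁ + m₁₁^3*m₂₂)) • (R*S+S*R)
      + (lam^2*(2*m₁₁*m₁₂^2*m₂₁ + 2*m₁₁^2*m₁₂*m₂₂)) • (R*T+T*R+S*S) + (lam^2*(m₁₂^3*m₂₁ + 3*m₁₁*m₁₂^2*m₂₂)) • (S*T+T*S)
      + (lam^2*(4*m₁₂^3*m₂₂)) • (T*T) := by
      simp only [smul_add, add_mul, mul_add, smul_mul_assoc, mul_smul_comm, smul_smul]
      match_scalars <;> ring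
    rw [h1, hRR, hRS, hCC, hST, hTT]
    simp only [Algebra.smul_def, ← map_mul, ← map_add]
    exact congrArg _ (by linear_combination -hb')
  · have h1 : ((lam*m₁₁^2) • R + (lam*(m₁₁*m₁₂)) • S + (lam*m₁₂^2) • T) * ((lam*m₂₁^2) • R + (lam*(m₂₁*m₂₂)) • S + (lam*m₂₂^2) • T) + ((lam*m₂₁^2) • R + (lam*(m₂₁*m₂₂)) • S + (lam*m₂₂^2) • T) * ((lam*m₁₁^2) • R + (lam*(m₁₁*m₁₂)) • S + (lam*m₁₂^2) • T) + ((lam*(2*m₁₁*m₂₁)) • R + (lam*(m₁₁*m₂₂+m₁₂*m₂₁)) • S + (lam*(2*m₁₂*m₂₂)) • T) * ((lam*(2*m₁₁*m₂₁)) • R + (lam*(m₁₁*m₂₂+m₁₂*m₂₁)) • S + (lam*(2*m₁₂*m₂₂)) • T)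
      = (lam^2*(6*m₁₁^2*m₂₁^2)) • (R*R) + (lam^2*(3*m₁₁*m₁₂*m₂₁^2 + 3*m₁₁^2*m₂₁*m₂₂)) • (R*S+S*R)
      + (lam^2*(m₁₂^2*m₂₁^2 + 4*m₁₁*m₁₂*m₂₁*m₂₂ + m₁₁^2*m₂₂^2)) • (R*T+T*R+S*S) + (lam^2*(3*m₁₂^2*m₂₁*m₂₂ + 3*m₁₁*m₁₂*m₂₂^2)) • (S*T+T*S)
      + (lam^2*(6*m₁₂^2*m₂₂^2)) • (T*T) := by
      simp only [smul_add, add_mul, mul_add, smul_mul_assoc, mul_smul_comm, smul_smul]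
      match_scalars <;> ring
    rw [h1, hRR, hRS, hCC, hST, hTT]
    simp only [Algebra.smul_def, ← map_mul, ← map_add]
    exact congrArg _ (by linear_combination -hc')
  · have h1 : ((lam*(2*m₁₁*m₂₁)) • R + (lam*(m₁₁*m₂₂+m₁₂*m₂₁)) • S + (lam*(2*m₁₂*m₂₂)) • T) * ((lam*m₂₁^2) • R + (lam*(m₂₁*m₂₂)) • S + (lam*m₂₂^2) • T) + ((lam*m₂₁^2) • R + (lam*(m₂₁*m₂₂)) • S + (lam*m₂₂^2) • T) * ((lam*(2*m₁₁*m₂₁)) • R + (lam*(m₁₁*m₂₂+m₁₂*m₂₁)) • S + (lam*(2*m₁₂*m₂₂)) • T)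
      = (lam^2*(4*m₁₁*m₂₁^3)) • (R*R) + (lam^2*(m₁₂*m₂₁^3 + 3*m₁₁*m₂₁^2*m₂₂)) • (R*S+S*R)
      + (lam^2*(2*m₁₂*m₂₁^2*m₂₂ + 2*m₁₁*m₂₁*m₂₂^2)) • (R*T+T*R+S*S) + (lam^2*(3*m₁₂*m₂₁*m₂₂^2 + m₁₁*m₂₂^3)) • (S*T+T*S)
      + (lam^2*(4*m₁₂*m₂₂^3)) • (T*T) := by
      simp only [smul_add, add_mul, mul_add, smul_mul_assoc, mul_smul_comm, smul_smul]
      match_scalars <;> ring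
    rw [h1, hRR, hRS, hCC, hST, hTT]
    simp only [Algebra.smul_def, ← map_mul, ← map_add]
    exact congrArg _ (by linear_combination -hd')
  · have h1 : ((lam*m₂₁^2) • R + (lam*(m₂₁*m₂₂)) • S + (lam*m₂₂^2) • T) * ((lam*m₂₁^2) • R + (lam*(m₂₁*m₂₂)) • S + (lam*m₂₂^2) • T)
      = (lam^2*m₂₁^4) • (R*R) + (lam^2*(m₂₁^3*m₂₂)) • (R*S+S*R)
      + (lam^2*(m₂₁^2*m₂₂^2)) • (R*T+T*R+S*S) + (lam^2*(m₂₁*m₂₂^3)) • (S*T+T*S)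
      + (lam^2*m₂₂^4) • (T*T) := by
      simp only [smul_add, add_mul, mul_add, smul_mul_assoc, mul_smul_comm, smul_smul]
      match_scalars <;> ring
    rw [h1, hRR, hRS, hCC, hST, hTT]
    simp only [Algebra.smul_def, ← map_mul, ← map_add]
    exact congrArg _ (by linear_combination -he')

theorem bq_rels (a b c d e : K) :
    bqR K a b c d e * bqR K a b c d e = algebraMap K _ a ∧
    bqR K a b c d e * bqS K a b c d e + bqS K a b c d e * bqR K a b c d e = algebraMap K _ b ∧
    bqR K a b c d e * bqT K a b c d e + bqT K a b c d e * bqR K a b c d e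
      + bqS K a b c d e * bqS K a b c d e = algebraMap K _ c ∧
    bqS K a b c d e * bqT K a b c d e + bqT K a b c d e * bqS K a b c d e = algebraMap K _ d ∧
    bqT K a b c d e * bqT K a b c d e = algebraMap K _ e := by
  refine ⟨?_, ?_, ?_, ?_, ?_⟩
  · have h := RingQuot.mkAlgHom_rel K
      (s := bqRel K a b c d e)
      (x := FreeAlgebra.ι K 0 * FreeAlgebra.ι K 0 - algebraMap K _ a) (y := 0)
      ⟨rfl, Or.inl rfl⟩
    rw [map_sub, map_mul, map_zero, sub_eq_zero, AlgHom.commutes] at h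
    exact h
  · have h := RingQuot.mkAlgHom_rel K
      (s := bqRel K a b c d e)
      (x := FreeAlgebra.ι K 0 * FreeAlgebra.ι K 1 + FreeAlgebra.ι K 1 * FreeAlgebra.ι K 0
        - algebraMap K _ b) (y := 0)
      ⟨rfl, Or.inr (Or.inl rfl)⟩
    rw [map_sub, map_add, map_mul, map_mul, map_zero, sub_eq_zero, AlgHom.commutes] at h
    exact h
  · have h := RingQuot.mkAlgHom_rel K
      (s := bqRel K a b c d e)
      (x := FreeAlgebra.ι K 0 * FreeAlgebra.ι K 2 + FreeAlgebra.ι K 2 * FreeAlgebra.ι K 0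
        + FreeAlgebra.ι K 1 * FreeAlgebra.ι K 1 - algebraMap K _ c) (y := 0)
      ⟨rfl, Or.inr (Or.inr (Or.inl rfl))⟩
    rw [map_sub, map_add, map_add, map_mul, map_mul, map_mul, map_zero, sub_eq_zero,
      AlgHom.commutes] at h
    exact h
  · have h := RingQuot.mkAlgHom_rel K
      (s := bqRel K a b c d e)
      (x := FreeAlgebra.ι K 1 * FreeAlgebra.ι K 2 + FreeAlgebra.ι K 2 * FreeAlgebra.ι K 1
        - algebraMap K _ d) (y := 0)
      ⟨rfl, Or.inr (Or.inr (Or.inr (Or.inl rfl)))⟩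
    rw [map_sub, map_add, map_mul, map_mul, map_zero, sub_eq_zero, AlgHom.commutes] at h
    exact h
  · have h := RingQuot.mkAlgHom_rel K
      (s := bqRel K a b c d e)
      (x := FreeAlgebra.ι K 2 * FreeAlgebra.ι K 2 - algebraMap K _ e) (y := 0)
      ⟨rfl, Or.inr (Or.inr (Or.inr (Or.inr rfl)))⟩
    rw [map_sub, map_mul, map_zero, sub_eq_zero, AlgHom.commutes] at h
    exact h

theorem bq_hom (a b c d e a' b' c' d' e' lam m₁₁ m₁₂ m₂₁ m₂₂ : K)
    (ha' : a' = lam^2*(a*m₁₁^4 + b*m₁₁^3*m₁₂ + c*m₁₁^2*m₁₂^2 + d*m₁₁*m₁₂^3 + e*m₁₂^4))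
    (hb' : b' = lam^2*(4*a*m₁₁^3*m₂₁ + b*(3*m₁₁^2*m₁₂*m₂₁ + m₁₁^3*m₂₂) + c*(2*m₁₁*m₁₂^2*m₂₁ + 2*m₁₁^2*m₁₂*m₂₂) + d*(m₁₂^3*m₂₁ + 3*m₁₁*m₁₂^2*m₂₂) + 4*e*m₁₂^3*m₂₂))
    (hc' : c' = lam^2*(6*a*m₁₁^2*m₂₁^2 + b*(3*m₁₁*m₁₂*m₂₁^2 + 3*m₁₁^2*m₂₁*m₂₂) + c*(m₁₂^2*m₂₁^2 + 4*m₁₁*m₁₂*m₂₁*m₂₂ + m₁₁^2*m₂₂^2) + d*(3*m₁₂^2*m₂₁*m₂₂ + 3*m₁₁*m₁₂*m₂₂^2) + 6*e*m₁₂^2*m₂₂^2))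
    (hd' : d' = lam^2*(4*a*m₁₁*m₂₁^3 + b*(m₁₂*m₂₁^3 + 3*m₁₁*m₂₁^2*m₂₂) + c*(2*m₁₂*m₂₁^2*m₂₂ + 2*m₁₁*m₂₁*m₂₂^2) + d*(3*m₁₂*m₂₁*m₂₂^2 + m₁₁*m₂₂^3) + 4*e*m₁₂*m₂₂^3))
    (he' : e' = lam^2*(a*m₂₁^4 + b*m₂₁^3*m₂₂ + c*m₂₁^2*m₂₂^2 + d*m₂₁*m₂₂^3 + e*m₂₂^4))
    :
    ∃ ψ : BQAlg K a' b' c' d' e' →ₐ[K] BQAlg K a b c d e,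
      ψ (bqR K a' b' c' d' e') = (lam*m₁₁^2) • bqR K a b c d e
        + (lam*(m₁₁*m₁₂)) • bqS K a b c d e + (lam*m₁₂^2) • bqT K a b c d e ∧
      ψ (bqS K a' b' c' d' e') = (lam*(2*m₁₁*m₂₁)) • bqR K a b c d e
        + (lam*(m₁₁*m₂₂+m₁₂*m₂₁)) • bqS K a b c d e + (lam*(2*m₁₂*m₂₂)) • bqT K a b c d e ∧
      ψ (bqT K a' b' c' d' e') = (lam*m₂₁^2) • bqR K a b c d e
        + (lam*(m₂₁*m₂₂)) • bqS K a b c d e + (lam*m₂₂^2) • bqT K a b c d e := by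
  obtain ⟨hRR, hRS, hCC, hST, hTT⟩ := bq_rels a b c d e
  obtain ⟨k1, k2, k3, k4, k5⟩ := bq_rel_stable (bqR K a b c d e) (bqS K a b c d e)
    (bqT K a b c d e) a b c d e lam m₁₁ m₁₂ m₂₁ m₂₂ a' b' c' d' e'
    hRR hRS hCC hST hTT ha' hb' hc' hd' he'
  set F : FreeAlgebra K (Fin 3) →ₐ[K] BQAlg K a b c d e := FreeAlgebra.lift K
    ![(lam*m₁₁^2) • bqR K a b c d e + (lam*(m₁₁*m₁₂)) • bqS K a b c d e
        + (lam*m₁₂^2) • bqT K a b c d e,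
      (lam*(2*m₁₁*m₂₁)) • bqR K a b c d e + (lam*(m₁₁*m₂₂+m₁₂*m₂₁)) • bqS K a b c d e
        + (lam*(2*m₁₂*m₂₂)) • bqT K a b c d e,
      (lam*m₂₁^2) • bqR K a b c d e + (lam*(m₂₁*m₂₂)) • bqS K a b c d e
        + (lam*m₂₂^2) • bqT K a b c d e] with hF
  have hco : ∀ ⦃x y : FreeAlgebra K (Fin 3)⦄, bqRel K a' b' c' d' e' x y → F x = F y := by
    rintro x y ⟨rfl, rfl | rfl | rfl | rfl | rfl⟩ <;>
    · simp only [hF, map_sub, map_add, map_mul, map_zero, AlgHom.commutes,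
        FreeAlgebra.lift_ι_apply, Matrix.cons_val_zero, Matrix.cons_val_one, Matrix.head_cons,
        Matrix.cons_val_two, Matrix.tail_cons]
      rw [sub_eq_zero]
      first
      | exact k1 | exact k2 | exact k3 | exact k4 | exact k5
  refine ⟨RingQuot.liftAlgHom K ⟨F, hco⟩, ?_, ?_, ?_⟩
  · refine (RingQuot.liftAlgHom_mkAlgHom_apply K F hco _).trans ?_
    simp [hF, FreeAlgebra.lift_ι_apply]
  · refine (RingQuot.liftAlgHom_mkAlgHom_apply K F hco _).trans ?_
    simp [hF, FreeAlgebra.lift_ι_apply]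
  · refine (RingQuot.liftAlgHom_mkAlgHom_apply K F hco _).trans ?_
    simp [hF, FreeAlgebra.lift_ι_apply]

open MvPolynomial in
theorem bq_coeff_ext {p₀ p₁ p₂ p₃ p₄ q₀ q₁ q₂ q₃ q₄ : K}
    (h : (C p₀ * X 0^4 + C p₁ * X 0^3 * X 1 + C p₂ * X 0^2 * X 1^2 + C p₃ * X 0 * X 1^3
        + C p₄ * X 1^4 : MvPolynomial (Fin 2) K)
      = C q₀ * X 0^4 + C q₁ * X 0^3 * X 1 + C q₂ * X 0^2 * X 1^2 + C q₃ * X 0 * X 1^3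
        + C q₄ * X 1^4) :
    p₀ = q₀ ∧ p₁ = q₁ ∧ p₂ = q₂ ∧ p₃ = q₃ ∧ p₄ = q₄ := by
  refine ⟨?_, ?_, ?_, ?_, ?_⟩
  · have := congrArg (coeff (Finsupp.single 0 4)) h
    simpa [MvPolynomial.X, monomial_pow, monomial_mul, C_mul_monomial,
      coeff_monomial, Finsupp.ext_iff, Fin.forall_fin_two, Finsupp.add_apply,
      Finsupp.smul_apply, Finsupp.single_apply] using this
  · have := congrArg (coeff (Finsupp.single 0 3 + Finsupp.single 1 1)) h
    simpa [MvPolynomial.X, monomial_pow, monomial_mul, C_mul_monomial,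
      coeff_monomial, Finsupp.ext_iff, Fin.forall_fin_two, Finsupp.add_apply,
      Finsupp.smul_apply, Finsupp.single_apply] using this
  · have := congrArg (coeff (Finsupp.single 0 2 + Finsupp.single 1 2)) h
    simpa [MvPolynomial.X, monomial_pow, monomial_mul, C_mul_monomial,
      coeff_monomial, Finsupp.ext_iff, Fin.forall_fin_two, Finsupp.add_apply,
      Finsupp.smul_apply, Finsupp.single_apply] using this
  · have := congrArg (coeff (Finsupp.single 0 1 + Finsupp.single 1 3)) h
    simpa [MvPolynomial.X, monomial_pow, monomial_mul, C_mul_monomial,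
      coeff_monomial, Finsupp.ext_iff, Fin.forall_fin_two, Finsupp.add_apply,
      Finsupp.smul_apply, Finsupp.single_apply] using this
  · have := congrArg (coeff (Finsupp.single 1 4)) h
    simpa [MvPolynomial.X, monomial_pow, monomial_mul, C_mul_monomial,
      coeff_monomial, Finsupp.ext_iff, Fin.forall_fin_two, Finsupp.add_apply,
      Finsupp.smul_apply, Finsupp.single_apply] using this

end BQAux

set_option maxHeartbeats 1000000 in
open MvPolynomial in
/-- Let `f` and `f'` be binary quartics with `f'(x,z) = λ²f(m₁₁x+m₂₁z, m₁₂x+m₂₂z)` for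
`λ ∈ K^×` and `M = (mᵢⱼ) ∈ GL₂(K)`.  Then `r ↦ λ(m₁₁²r + m₁₁m₁₂s + m₁₂²t)`,
`s ↦ λ(2m₁₁m₂₁r + (m₁₁m₂₂+m₁₂m₂₁)s + 2m₁₂m₂₂t)`, `t ↦ λ(m₂₁²r + m₂₁m₂₂s + m₂₂²t)`
defines a `K`-algebra isomorphism `ψ : A_{f'} → A_f`. -/
theorem bq_change_of_coords (K : Type*) [Field K] (h2 : (2 : K) ≠ 0) (h3 : (3 : K) ≠ 0)
    (a b c d e a' b' c' d' e' lam m₁₁ m₁₂ m₂₁ m₂₂ : K)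
    (hlam : lam ≠ 0) (hM : m₁₁ * m₂₂ - m₁₂ * m₂₁ ≠ 0)
    (hf' :
      (C a' * (X 0) ^ 4 + C b' * (X 0) ^ 3 * (X 1) + C c' * (X 0) ^ 2 * (X 1) ^ 2
        + C d' * (X 0) * (X 1) ^ 3 + C e' * (X 1) ^ 4 : MvPolynomial (Fin 2) K) =
      C (lam ^ 2) *
        (C a * (C m₁₁ * X 0 + C m₂₁ * X 1) ^ 4
          + C b * (C m₁₁ * X 0 + C m₂₁ * X 1) ^ 3 * (C m₁₂ * X 0 + C m₂₂ * X 1)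
          + C c * (C m₁₁ * X 0 + C m₂₁ * X 1) ^ 2 * (C m₁₂ * X 0 + C m₂₂ * X 1) ^ 2
          + C d * (C m₁₁ * X 0 + C m₂₁ * X 1) * (C m₁₂ * X 0 + C m₂₂ * X 1) ^ 3
          + C e * (C m₁₂ * X 0 + C m₂₂ * X 1) ^ 4)) :
    letI r := bqR K a b c d e
    letI s := bqS K a b c d e
    letI t := bqT K a b c d e
    letI α : K → BQAlg K a b c d e := algebraMap K _
    ∃ ψ : BQAlg K a' b' c' d' e' ≃ₐ[K] BQAlg K a b c d e,
      ψ (bqR K a' b' c' d' e') =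
        α lam * (α (m₁₁ ^ 2) * r + α (m₁₁ * m₁₂) * s + α (m₁₂ ^ 2) * t) ∧
      ψ (bqS K a' b' c' d' e') =
        α lam * (α (2 * m₁₁ * m₂₁) * r + α (m₁₁ * m₂₂ + m₁₂ * m₂₁) * s
          + α (2 * m₁₂ * m₂₂) * t) ∧
      ψ (bqT K a' b' c' d' e') =
        α lam * (α (m₂₁ ^ 2) * r + α (m₂₁ * m₂₂) * s + α (m₂₂ ^ 2) * t) := by
  have hLne : lam*(m₁₁*m₂₂-m₁₂*m₂₁)^2 ≠ 0 := mul_ne_zero hlam (pow_ne_zero 2 hM)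
  have hLone : (lam*(m₁₁*m₂₂-m₁₂*m₂₁)^2)⁻¹^2 * (lam^2*(m₁₁*m₂₂-m₁₂*m₂₁)^4) = 1 := by
    rw [inv_pow, inv_mul_eq_one₀ (pow_ne_zero 2 hLne)]
    ring
  have hstd :
      (C (lam ^ 2) *
        (C a * (C m₁₁ * X 0 + C m₂₁ * X 1) ^ 4
          + C b * (C m₁₁ * X 0 + C m₂₁ * X 1) ^ 3 * (C m₁₂ * X 0 + C m₂₂ * X 1)
          + C c * (C m₁₁ * X 0 + C m₂₁ * X 1) ^ 2 * (C m₁₂ * X 0 + C m₂₂ * X 1) ^ 2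
          + C d * (C m₁₁ * X 0 + C m₂₁ * X 1) * (C m₁₂ * X 0 + C m₂₂ * X 1) ^ 3
          + C e * (C m₁₂ * X 0 + C m₂₂ * X 1) ^ 4) : MvPolynomial (Fin 2) K) =
      C (lam^2*(a*m₁₁^4 + b*m₁₁^3*m₁₂ + c*m₁₁^2*m₁₂^2 + d*m₁₁*m₁₂^3 + e*m₁₂^4)) * X 0 ^ 4
      + C (lam^2*(4*a*m₁₁^3*m₂₁ + b*(3*m₁₁^2*m₁₂*m₂₁ + m₁₁^3*m₂₂) + c*(2*m₁₁*m₁₂^2*m₂₁ + 2*m₁₁^2*m₁₂*m₂₂) + d*(m₁₂^3*m₂₁ + 3*m₁₁*m₁₂^2*m₂₂) + 4*e*m₁₂^3*m₂₂)) * X 0 ^ 3 * X 1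
      + C (lam^2*(6*a*m₁₁^2*m₂₁^2 + b*(3*m₁₁*m₁₂*m₂₁^2 + 3*m₁₁^2*m₂₁*m₂₂) + c*(m₁₂^2*m₂₁^2 + 4*m₁₁*m₁₂*m₂₁*m₂₂ + m₁₁^2*m₂₂^2) + d*(3*m₁₂^2*m₂₁*m₂₂ + 3*m₁₁*m₁₂*m₂₂^2) + 6*e*m₁₂^2*m₂₂^2)) * X 0 ^ 2 * X 1 ^ 2
      + C (lam^2*(4*a*m₁₁*m₂₁^3 + b*(m₁₂*m₂₁^3 + 3*m₁₁*m₂₁^2*m₂₂) + c*(2*m₁₂*m₂₁^2*m₂₂ + 2*m₁₁*m₂₁*m₂₂^2) + d*(3*m₁₂*m₂₁*m₂₂^2 + m₁₁*m₂₂^3) + 4*e*m₁₂*m₂₂^3)) * X 0 * X 1 ^ 3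
      + C (lam^2*(a*m₂₁^4 + b*m₂₁^3*m₂₂ + c*m₂₁^2*m₂₂^2 + d*m₂₁*m₂₂^3 + e*m₂₂^4)) * X 1 ^ 4 := by
    simp only [map_mul, map_add, map_pow, map_ofNat]
    ring
  obtain ⟨ha', hb', hc', hd', he'⟩ := bq_coeff_ext (hf'.trans hstd)
  obtain ⟨ψ, hψ1, hψ2, hψ3⟩ := bq_hom a b c d e a' b' c' d' e' lam m₁₁ m₁₂ m₂₁ m₂₂
    ha' hb' hc' hd' he'
  have keyhA : a * (lam^2*(m₁₁*m₂₂-m₁₂*m₂₁)^4) = a'*m₂₂^4 + b'*m₂₂^3*(-m₁₂) + c'*m₂₂^2*(-m₁₂)^2 + d'*m₂₂*(-m₁₂)^3 + e'*(-m₁₂)^4 := by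
    linear_combination -((m₂₂^4)*ha') - ((m₂₂^3*(-m₁₂))*hb') - ((m₂₂^2*(-m₁₂)^2)*hc') - ((m₂₂*(-m₁₂)^3)*hd') - (((-m₁₂)^4)*he')
  have hA : a = (lam*(m₁₁*m₂₂-m₁₂*m₂₁)^2)⁻¹^2*(a'*m₂₂^4 + b'*m₂₂^3*(-m₁₂) + c'*m₂₂^2*(-m₁₂)^2 + d'*m₂₂*(-m₁₂)^3 + e'*(-m₁₂)^4) := by
    have h1 : a = (lam*(m₁₁*m₂₂-m₁₂*m₂₁)^2)⁻¹^2*(a * (lam^2*(m₁₁*m₂₂-m₁₂*m₂₁)^4)) := by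
      linear_combination (-a)*hLone
    rw [keyhA] at h1
    exact h1
  have keyhB : b * (lam^2*(m₁₁*m₂₂-m₁₂*m₂₁)^4) = 4*a'*m₂₂^3*(-m₂₁) + b'*(3*m₂₂^2*(-m₁₂)*(-m₂₁) + m₂₂^3*m₁₁) + c'*(2*m₂₂*(-m₁₂)^2*(-m₂₁) + 2*m₂₂^2*(-m₁₂)*m₁₁) + d'*((-m₁₂)^3*(-m₂₁) + 3*m₂₂*(-m₁₂)^2*m₁₁) + 4*e'*(-m₁₂)^3*m₁₁ := by
    linear_combination -((4*m₂₂^3*(-m₂₁))*ha') - ((3*m₂₂^2*(-m₁₂)*(-m₂₁) + m₂₂^3*m₁₁)*hb') - ((2*m₂₂*(-m₁₂)^2*(-m₂₁) + 2*m₂₂^2*(-m₁₂)*m₁₁)*hc') - (((-m₁₂)^3*(-m₂₁) + 3*m₂₂*(-m₁₂)^2*m₁₁)*hd') - ((4*(-m₁₂)^3*m₁₁)*he')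
  have hB : b = (lam*(m₁₁*m₂₂-m₁₂*m₂₁)^2)⁻¹^2*(4*a'*m₂₂^3*(-m₂₁) + b'*(3*m₂₂^2*(-m₁₂)*(-m₂₁) + m₂₂^3*m₁₁) + c'*(2*m₂₂*(-m₁₂)^2*(-m₂₁) + 2*m₂₂^2*(-m₁₂)*m₁₁) + d'*((-m₁₂)^3*(-m₂₁) + 3*m₂₂*(-m₁₂)^2*m₁₁) + 4*e'*(-m₁₂)^3*m₁₁) := by
    have h1 : b = (lam*(m₁₁*m₂₂-m₁₂*m₂₁)^2)⁻¹^2*(b * (lam^2*(m₁₁*m₂₂-m₁₂*m₂₁)^4)) := by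
      linear_combination (-b)*hLone
    rw [keyhB] at h1
    exact h1
  have keyhC : c * (lam^2*(m₁₁*m₂₂-m₁₂*m₂₁)^4) = 6*a'*m₂₂^2*(-m₂₁)^2 + b'*(3*m₂₂*(-m₁₂)*(-m₂₁)^2 + 3*m₂₂^2*(-m₂₁)*m₁₁) + c'*((-m₁₂)^2*(-m₂₁)^2 + 4*m₂₂*(-m₁₂)*(-m₂₁)*m₁₁ + m₂₂^2*m₁₁^2) + d'*(3*(-m₁₂)^2*(-m₂₁)*m₁₁ + 3*m₂₂*(-m₁₂)*m₁₁^2) + 6*e'*(-m₁₂)^2*m₁₁^2 := by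
    linear_combination -((6*m₂₂^2*(-m₂₁)^2)*ha') - ((3*m₂₂*(-m₁₂)*(-m₂₁)^2 + 3*m₂₂^2*(-m₂₁)*m₁₁)*hb') - (((-m₁₂)^2*(-m₂₁)^2 + 4*m₂₂*(-m₁₂)*(-m₂₁)*m₁₁ + m₂₂^2*m₁₁^2)*hc') - ((3*(-m₁₂)^2*(-m₂₁)*m₁₁ + 3*m₂₂*(-m₁₂)*m₁₁^2)*hd') - ((6*(-m₁₂)^2*m₁₁^2)*he')
  have hC : c = (lam*(m₁₁*m₂₂-m₁₂*m₂₁)^2)⁻¹^2*(6*a'*m₂₂^2*(-m₂₁)^2 + b'*(3*m₂₂*(-m₁₂)*(-m₂₁)^2 + 3*m₂₂^2*(-m₂₁)*m₁₁) + c'*((-m₁₂)^2*(-m₂₁)^2 + 4*m₂₂*(-m₁₂)*(-m₂₁)*m₁₁ + m₂₂^2*m₁₁^2) + d'*(3*(-m₁₂)^2*(-m₂₁)*m₁₁ + 3*m₂₂*(-m₁₂)*m₁₁^2) + 6*e'*(-m₁₂)^2*m₁₁^2) := by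
    have h1 : c = (lam*(m₁₁*m₂₂-m₁₂*m₂₁)^2)⁻¹^2*(c * (lam^2*(m₁₁*m₂₂-m₁₂*m₂₁)^4)) := by
      linear_combination (-c)*hLone
    rw [keyhC] at h1
    exact h1
  have keyhD : d * (lam^2*(m₁₁*m₂₂-m₁₂*m₂₁)^4) = 4*a'*m₂₂*(-m₂₁)^3 + b'*((-m₁₂)*(-m₂₁)^3 + 3*m₂₂*(-m₂₁)^2*m₁₁) + c'*(2*(-m₁₂)*(-m₂₁)^2*m₁₁ + 2*m₂₂*(-m₂₁)*m₁₁^2) + d'*(3*(-m₁₂)*(-m₂₁)*m₁₁^2 + m₂₂*m₁₁^3) + 4*e'*(-m₁₂)*m₁₁^3 := by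
    linear_combination -((4*m₂₂*(-m₂₁)^3)*ha') - (((-m₁₂)*(-m₂₁)^3 + 3*m₂₂*(-m₂₁)^2*m₁₁)*hb') - ((2*(-m₁₂)*(-m₂₁)^2*m₁₁ + 2*m₂₂*(-m₂₁)*m₁₁^2)*hc') - ((3*(-m₁₂)*(-m₂₁)*m₁₁^2 + m₂₂*m₁₁^3)*hd') - ((4*(-m₁₂)*m₁₁^3)*he')
  have hD : d = (lam*(m₁₁*m₂₂-m₁₂*m₂₁)^2)⁻¹^2*(4*a'*m₂₂*(-m₂₁)^3 + b'*((-m₁₂)*(-m₂₁)^3 + 3*m₂₂*(-m₂₁)^2*m₁₁) + c'*(2*(-m₁₂)*(-m₂₁)^2*m₁₁ + 2*m₂₂*(-m₂₁)*m₁₁^2) + d'*(3*(-m₁₂)*(-m₂₁)*m₁₁^2 + m₂₂*m₁₁^3) + 4*e'*(-m₁₂)*m₁₁^3) := by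
    have h1 : d = (lam*(m₁₁*m₂₂-m₁₂*m₂₁)^2)⁻¹^2*(d * (lam^2*(m₁₁*m₂₂-m₁₂*m₂₁)^4)) := by
      linear_combination (-d)*hLone
    rw [keyhD] at h1
    exact h1
  have keyhE : e * (lam^2*(m₁₁*m₂₂-m₁₂*m₂₁)^4) = a'*(-m₂₁)^4 + b'*(-m₂₁)^3*m₁₁ + c'*(-m₂₁)^2*m₁₁^2 + d'*(-m₂₁)*m₁₁^3 + e'*m₁₁^4 := by
    linear_combination -(((-m₂₁)^4)*ha') - (((-m₂₁)^3*m₁₁)*hb') - (((-m₂₁)^2*m₁₁^2)*hc') - (((-m₂₁)*m₁₁^3)*hd') - ((m₁₁^4)*he')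
  have hE : e = (lam*(m₁₁*m₂₂-m₁₂*m₂₁)^2)⁻¹^2*(a'*(-m₂₁)^4 + b'*(-m₂₁)^3*m₁₁ + c'*(-m₂₁)^2*m₁₁^2 + d'*(-m₂₁)*m₁₁^3 + e'*m₁₁^4) := by
    have h1 : e = (lam*(m₁₁*m₂₂-m₁₂*m₂₁)^2)⁻¹^2*(e * (lam^2*(m₁₁*m₂₂-m₁₂*m₂₁)^4)) := by
      linear_combination (-e)*hLone
    rw [keyhE] at h1
    exact h1
  obtain ⟨φ, hφ1, hφ2, hφ3⟩ := bq_hom a' b' c' d' e' a b c d e (lam*(m₁₁*m₂₂-m₁₂*m₂₁)^2)⁻¹ m₂₂ (-m₁₂) (-m₂₁) m₁₁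
    hA hB hC hD hE
  have e1 : ψ (φ (bqR K a b c d e)) = bqR K a b c d e := by
    rw [hφ1, map_add, map_add, map_smul, map_smul, map_smul, hψ1, hψ2, hψ3]
    match_scalars <;> field_simp <;> ring
  have e2 : ψ (φ (bqS K a b c d e)) = bqS K a b c d e := by
    rw [hφ2, map_add, map_add, map_smul, map_smul, map_smul, hψ1, hψ2, hψ3]
    match_scalars <;> field_simp <;> ring
  have e3 : ψ (φ (bqT K a b c d e)) = bqT K a b c d e := by
    rw [hφ3, map_add, map_add, map_smul, map_smul, map_smul, hψ1, hψ2, hψ3]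
    match_scalars <;> field_simp <;> ring
  have e1' : φ (ψ (bqR K a' b' c' d' e')) = bqR K a' b' c' d' e' := by
    rw [hψ1, map_add, map_add, map_smul, map_smul, map_smul, hφ1, hφ2, hφ3]
    match_scalars <;> field_simp <;> ring
  have e2' : φ (ψ (bqS K a' b' c' d' e')) = bqS K a' b' c' d' e' := by
    rw [hψ2, map_add, map_add, map_smul, map_smul, map_smul, hφ1, hφ2, hφ3]
    match_scalars
    · field_simp
      ring
    · linear_combination inv_mul_cancel₀ hLne
    · field_simp
      ring
  have e3' : φ (ψ (bqT K a' b' c' d' e')) = bqT K a' b' c' d' e' := by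
    rw [hψ3, map_add, map_add, map_smul, map_smul, map_smul, hφ1, hφ2, hφ3]
    match_scalars
    · field_simp
      ring
    · field_simp
      ring
    · linear_combination inv_mul_cancel₀ hLne
  have h1 : ψ.comp φ = AlgHom.id K (BQAlg K a b c d e) := by
    refine RingQuot.ringQuot_ext' K _ _ ?_
    refine FreeAlgebra.hom_ext ?_
    funext i
    fin_cases i
    · exact e1
    · exact e2
    · exact e3
  have h2 : φ.comp ψ = AlgHom.id K (BQAlg K a' b' c' d' e') := by
    refine RingQuot.ringQuot_ext' K _ _ ?_
    refine FreeAlgebra.hom_ext ?_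
    funext i
    fin_cases i
    · exact e1'
    · exact e2'
    · exact e3'
  refine ⟨AlgEquiv.ofAlgHom ψ φ h1 h2, ?_, ?_, ?_⟩
  · show ψ (bqR K a' b' c' d' e') = _
    rw [hψ1]
    simp only [← Algebra.smul_def]
    module
  · show ψ (bqS K a' b' c' d' e') = _
    rw [hψ2]
    simp only [← Algebra.smul_def]
    module
  · show ψ (bqT K a' b' c' d' e') = _
    rw [hψ3]
    simp only [← Algebra.smul_def]
    module
end
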